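/- arXiv:2409.14136 — 4 statements merged into one kernel-verified Lean document; each statement's English description precedes it below -/
import Mathlib

section
/- Let G be a symmetric {0,1} adjacency matrix of an undirected simple graph on n nodes, and let i, j be distinct nodes such that the neighbors of j (excluding i) are strictly contained in neighbors of i (excluding j). Let L be a nonempty set of nodes disjoint from {i,j} and from the neighbors of i. Then for every integer k ≥ 2, the total number of walks of length k in the graph G + Σ_{l∈L} E_{il} is strictly greater than in the graph G + Σ_{l∈L} E_{jl}, i.e., 1'(G + Σ E_{il})^k 1 > 1'(G + Σ E_{jl})^k 1. -/
open Matrix BigOperators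

/-- The symmetric elementary matrix with 1 in entries (a,b) and (b,a), 0 elsewhere. -/
def E {n : ℕ} (a b : Fin n) : Matrix (Fin n) (Fin n) ℝ :=
  fun p q => if (p = a ∧ q = b) ∨ (p = b ∧ q = a) then 1 else 0

/-- The neighborhood of node `i` in the (0/1-valued) network `G`. -/
def Nbr {n : ℕ} (G : Matrix (Fin n) (Fin n) ℝ) (i : Fin n) : Set (Fin n) :=
  {l | G i l = 1}

section Helpers
open Finset

variable {n : ℕ}

def onesV (n : ℕ) : Fin n → ℝ := fun _ => 1

lemma mulVec_apply' (M : Matrix (Fin n) (Fin n) ℝ) (v : Fin n → ℝ) (x : Fin n) :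
    (M *ᵥ v) x = ∑ y, M x y * v y := by simp [mulVec, dotProduct]


lemma pow_succ_apply (M : Matrix (Fin n) (Fin n) ℝ) (v : Fin n → ℝ) (t : ℕ) (x : Fin n) :
    (M ^ (t+1) *ᵥ v) x = ∑ y, M x y * (M ^ t *ᵥ v) y := by
  rw [pow_succ', ← Matrix.mulVec_mulVec, mulVec_apply']

lemma dot_swap (M : Matrix (Fin n) (Fin n) ℝ) (hM : ∀ x y, M x y = M y x)
    (v w : Fin n → ℝ) : v ⬝ᵥ (M *ᵥ w) = w ⬝ᵥ (M *ᵥ v) := by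
  simp only [dotProduct, mulVec_apply', Finset.mul_sum]
  rw [Finset.sum_comm]
  refine Finset.sum_congr rfl fun x _ => Finset.sum_congr rfl fun y _ => ?_
  rw [hM y x]; ring

lemma pow_symm (M : Matrix (Fin n) (Fin n) ℝ) (hM : ∀ x y, M x y = M y x) (m : ℕ) :
    ∀ x y, (M ^ m) x y = (M ^ m) y x := by
  have ht : Mᵀ = M := by ext x y; exact hM y x
  intro x y
  have h2 : (M ^ m)ᵀ = M ^ m := by rw [Matrix.transpose_pow, ht]
  conv_lhs => rw [← h2]
  rfl

lemma pow_ones_nonneg (M : Matrix (Fin n) (Fin n) ℝ) (h : ∀ x y, 0 ≤ M x y) :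
    ∀ (t : ℕ) (x : Fin n), 0 ≤ (M ^ t *ᵥ onesV n) x := by
  intro t
  induction t with
  | zero => intro x; simp [onesV]
  | succ t ih =>
      intro x
      rw [pow_succ_apply]
      exact Finset.sum_nonneg fun y _ => mul_nonneg (h x y) (ih y)

lemma walk_mono (M : Matrix (Fin n) (Fin n) ℝ)
    (h01 : ∀ x y, M x y = 0 ∨ M x y = 1) (hM : ∀ x y, M x y = M y x) :
    ∀ (t : ℕ) (x : Fin n), (∃ y, M x y = 1) →
      (M ^ t *ᵥ onesV n) x ≤ (M ^ (t+1) *ᵥ onesV n) x := by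
  have hnn : ∀ x y, 0 ≤ M x y := fun x y => by rcases h01 x y with h | h <;> simp [h]
  intro t
  induction t with
  | zero =>
      rintro x ⟨y0, hy0⟩
      rw [pow_succ_apply]
      have h0 : (M ^ 0 *ᵥ onesV n) = onesV n := by simp
      rw [h0]
      have h1 : (M ^ 0 *ᵥ onesV n) x = M x y0 * (onesV n) y0 := by simp [onesV, hy0]
      rw [h0] at h1
      rw [h1]
      exact Finset.single_le_sum (fun y _ => mul_nonneg (hnn x y) (by simp [onesV]))
        (Finset.mem_univ y0)
  | succ t ih =>
      rintro x ⟨y0, hy0⟩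
      rw [pow_succ_apply, pow_succ_apply]
      refine Finset.sum_le_sum fun y _ => ?_
      rcases h01 x y with h | h
      · simp [h]
      · simp only [h, one_mul]
        exact ih y ⟨x, by rw [← hM x y, h]⟩

lemma walk_ge_one (M : Matrix (Fin n) (Fin n) ℝ)
    (h01 : ∀ x y, M x y = 0 ∨ M x y = 1) (hM : ∀ x y, M x y = M y x) :
    ∀ (t : ℕ) (x : Fin n), (∃ y, M x y = 1) → 1 ≤ (M ^ t *ᵥ onesV n) x := by
  have hnn : ∀ x y, 0 ≤ M x y := fun x y => by rcases h01 x y with h | h <;> simp [h]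
  intro t
  induction t with
  | zero => intro x _; simp [onesV]
  | succ t ih =>
      rintro x ⟨y0, hy0⟩
      rw [pow_succ_apply]
      have h1 : (1:ℝ) ≤ M x y0 * (M ^ t *ᵥ onesV n) y0 := by
        rw [hy0, one_mul]
        exact ih y0 ⟨x, by rw [← hM x y0, hy0]⟩
      calc (1:ℝ) ≤ M x y0 * (M ^ t *ᵥ onesV n) y0 := h1
        _ ≤ ∑ y, M x y * (M ^ t *ᵥ onesV n) y :=
            Finset.single_le_sum (fun y _ => mul_nonneg (hnn x y) (pow_ones_nonneg M hnn t y))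
              (Finset.mem_univ y0)

lemma telescope (A B : Matrix (Fin n) (Fin n) ℝ) :
    ∀ k : ℕ, A ^ k - B ^ k = ∑ m ∈ Finset.range k, A ^ m * (A - B) * B ^ (k - 1 - m) := by
  intro k
  induction k with
  | zero => simp
  | succ k ih =>
      have step : A ^ (k+1) - B ^ (k+1) = A * (A ^ k - B ^ k) + (A - B) * B ^ k := by
        rw [pow_succ' (a := A), pow_succ' (a := B)]
        noncomm_ring
      rw [step, ih, Finset.mul_sum]
      rw [Finset.sum_range_succ' (f := fun m => A ^ m * (A - B) * B ^ (k + 1 - 1 - m))]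
      have h0 : A ^ 0 * (A - B) * B ^ (k + 1 - 1 - 0) = (A - B) * B ^ k := by
        simp
      rw [h0]
      congr 1
      refine Finset.sum_congr rfl fun m hm => ?_
      have hm' : m < k := Finset.mem_range.mp hm
      have : k + 1 - 1 - (m + 1) = k - 1 - m := by omega
      rw [this, pow_succ']
      noncomm_ring

/-- Abstract recursion lemma for the double sum. -/
lemma rec_sum (c : ℝ) (U Ψ S G Φ S' : ℕ → ℝ)
    (hU0 : U 0 = 0) (hΨ0 : Ψ 0 = 0)
    (hU : ∀ m, U (m+1) = -c * U m + (S m + G m))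
    (hΨ : ∀ q, Ψ (q+1) = -c * Ψ q + (S' q - Φ q)) (k : ℕ) :
    (∑ m ∈ Finset.range (k+1), (U m * Φ (k-m) + G m * Ψ (k-m)))
      = -c * (∑ m ∈ Finset.range k, (U m * Φ (k-1-m) + G m * Ψ (k-1-m)))
        + ∑ m ∈ Finset.range k, (S m * Φ (k-1-m) + G m * S' (k-1-m)) := by
  have split : (∑ m ∈ Finset.range (k+1), (U m * Φ (k-m) + G m * Ψ (k-m)))
      = (∑ m ∈ Finset.range (k+1), U m * Φ (k-m))
        + (∑ m ∈ Finset.range (k+1), G m * Ψ (k-m)) := by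
    rw [← Finset.sum_add_distrib]
  rw [split]
  have h1 : (∑ m ∈ Finset.range (k+1), U m * Φ (k-m))
      = ∑ m ∈ Finset.range k, (-c * U m + (S m + G m)) * Φ (k-1-m) := by
    rw [Finset.sum_range_succ' (f := fun m => U m * Φ (k-m))]
    simp only [hU0, zero_mul, add_zero]
    refine Finset.sum_congr rfl fun m hm => ?_
    have hm' : m < k := Finset.mem_range.mp hm
    have he : k - (m+1) = k - 1 - m := by omega
    rw [hU m, he]
  have h2 : (∑ m ∈ Finset.range (k+1), G m * Ψ (k-m))
      = ∑ m ∈ Finset.range k, G m * (-c * Ψ (k-1-m) + (S' (k-1-m) - Φ (k-1-m))) := by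
    rw [Finset.sum_range_succ (f := fun m => G m * Ψ (k-m))]
    simp only [Nat.sub_self, hΨ0, mul_zero, add_zero]
    refine Finset.sum_congr rfl fun m hm => ?_
    have hm' : m < k := Finset.mem_range.mp hm
    have he : k - m = (k - 1 - m) + 1 := by omega
    rw [he, hΨ]
  rw [h1, h2, ← Finset.sum_add_distrib, Finset.mul_sum, ← Finset.sum_add_distrib]
  refine Finset.sum_congr rfl fun m hm => ?_
  ring

/-- Monotone gain lemma for Y. -/
lemma Y_gain (S G Φ S' : ℕ → ℝ)
    (hS : ∀ m, 0 ≤ S m) (hG : ∀ m, 0 ≤ G m) (hΦ : ∀ m, 0 ≤ Φ m) (hS' : ∀ m, 0 ≤ S' m)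
    (hSmono : ∀ m, S m ≤ S (m+1)) (hGmono : ∀ m, G m ≤ G (m+1)) (k : ℕ) :
    (∑ m ∈ Finset.range k, (S m * Φ (k-1-m) + G m * S' (k-1-m))) + S 0 * Φ k
      ≤ ∑ m ∈ Finset.range (k+1), (S m * Φ (k-m) + G m * S' (k-m)) := by
  rw [Finset.sum_range_succ' (f := fun m => S m * Φ (k-m) + G m * S' (k-m))]
  simp only [Nat.sub_zero]
  have hle : (∑ m ∈ Finset.range k, (S m * Φ (k-1-m) + G m * S' (k-1-m)))
      ≤ ∑ m ∈ Finset.range k, (S (m+1) * Φ (k-(m+1)) + G (m+1) * S' (k-(m+1))) := by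
    refine Finset.sum_le_sum fun m hm => ?_
    have hm' : m < k := Finset.mem_range.mp hm
    have he : k - (m+1) = k - 1 - m := by omega
    rw [he]
    exact add_le_add (mul_le_mul_of_nonneg_right (hSmono m) (hΦ _))
      (mul_le_mul_of_nonneg_right (hGmono m) (hS' _))
  have h0 : S 0 * Φ k ≤ S 0 * Φ k + G 0 * S' k := by
    nlinarith [mul_nonneg (hG 0) (hS' k)]
  linarith

/-- Final positivity: E 0 = 0, E (k+1) = -c E k + Y k gives E (k+2) ≥ S 0 * Φ k. -/
lemma key_pos (c : ℝ) (hc0 : 0 ≤ c) (hc1 : c ≤ 1) (S G Φ S' Ek : ℕ → ℝ)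
    (hS : ∀ m, 0 ≤ S m) (hG : ∀ m, 0 ≤ G m) (hΦ : ∀ m, 0 ≤ Φ m) (hS' : ∀ m, 0 ≤ S' m)
    (hSmono : ∀ m, S m ≤ S (m+1)) (hGmono : ∀ m, G m ≤ G (m+1))
    (hE0 : Ek 0 = 0)
    (hEr : ∀ k, Ek (k+1) = -c * Ek k
        + ∑ m ∈ Finset.range k, (S m * Φ (k-1-m) + G m * S' (k-1-m))) :
    ∀ k, S 0 * Φ k ≤ Ek (k+2) ∧
      Ek (k+2) ≤ ∑ m ∈ Finset.range (k+1), (S m * Φ (k-m) + G m * S' (k-m)) := by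
  have Ynn : ∀ k, 0 ≤ ∑ m ∈ Finset.range k, (S m * Φ (k-1-m) + G m * S' (k-1-m)) :=
    fun k => Finset.sum_nonneg fun m _ =>
      add_nonneg (mul_nonneg (hS m) (hΦ _)) (mul_nonneg (hG m) (hS' _))
  have hE1 : Ek 1 = 0 := by
    rw [hEr 0, hE0]; simp
  intro k
  induction k with
  | zero =>
      constructor
      · rw [hEr 1, hE1]
        simp only [mul_zero, neg_zero, zero_add]
        rw [Finset.sum_range_one]
        have := mul_nonneg (hG 0) (hS' 0)
        simp only [Nat.sub_zero, Nat.zero_sub, Nat.sub_self]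
        nlinarith
      · rw [hEr 1, hE1]
        simp only [mul_zero, neg_zero, zero_add]
        refine Finset.sum_le_sum fun m hm => ?_
        exact le_refl _
  | succ k ih =>
      obtain ⟨ihlo, ihhi⟩ := ih
      have hnn : 0 ≤ Ek (k+2) := le_trans (mul_nonneg (hS 0) (hΦ k)) ihlo
      have hrec := hEr (k+2)
      have hY : ∑ m ∈ Finset.range (k+2), (S m * Φ (k+2-1-m) + G m * S' (k+2-1-m))
          = ∑ m ∈ Finset.range (k+1+1), (S m * Φ (k+1-m) + G m * S' (k+1-m)) := by
        refine Finset.sum_congr rfl fun m hm => ?_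
        have : k+2-1-m = k+1-m := by omega
        rw [this]
      rw [hY] at hrec
      have hgain := Y_gain S G Φ S' hS hG hΦ hS' hSmono hGmono (k+1)
      have hcE : c * Ek (k+2) ≤ ∑ m ∈ Finset.range (k+1), (S m * Φ (k-m) + G m * S' (k-m)) := by
        calc c * Ek (k+2) ≤ 1 * Ek (k+2) := mul_le_mul_of_nonneg_right hc1 hnn
          _ = Ek (k+2) := one_mul _
          _ ≤ _ := ihhi
      have hYmm : ∑ m ∈ Finset.range (k+1), (S m * Φ (k+1-1-m) + G m * S' (k+1-1-m))
          = ∑ m ∈ Finset.range (k+1), (S m * Φ (k-m) + G m * S' (k-m)) := by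
        refine Finset.sum_congr rfl fun m hm => ?_
        have : k+1-1-m = k-m := by omega
        rw [this]
      constructor
      · rw [hrec]
        have := hgain
        rw [hYmm] at this
        linarith
      · rw [hrec]
        have : 0 ≤ c * Ek (k+2) := mul_nonneg hc0 hnn
        linarith

lemma sumMulVec {ι : Type*} (s : Finset ι) (M : ι → Matrix (Fin n) (Fin n) ℝ) (v : Fin n → ℝ) :
    (∑ i ∈ s, M i) *ᵥ v = ∑ i ∈ s, (M i *ᵥ v) := by
  funext x
  simp only [mulVec_apply', Matrix.sum_apply, Finset.sum_apply, Finset.sum_mul]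
  rw [Finset.sum_comm]

lemma dot_sum {ι : Type*} (v : Fin n → ℝ) (s : Finset ι) (w : ι → Fin n → ℝ) :
    v ⬝ᵥ (∑ i ∈ s, w i) = ∑ i ∈ s, v ⬝ᵥ w i := by
  simp only [dotProduct, Finset.sum_apply, Finset.mul_sum]
  rw [Finset.sum_comm]

lemma dot_expand (w u s f : Fin n → ℝ) (c : ℝ) :
    (w ⬝ᵥ fun x => -c * u x + (s x + f x)) = -c * (u ⬝ᵥ w) + (s ⬝ᵥ w + f ⬝ᵥ w) := by
  have h1 : ∀ x, w x * (-c * u x + (s x + f x))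
      = -c * (u x * w x) + (s x * w x + f x * w x) := fun x => by ring
  simp only [dotProduct, h1, Finset.sum_add_distrib, ← Finset.mul_sum]

lemma dot_expand' (w u s f : Fin n → ℝ) (c : ℝ) :
    (w ⬝ᵥ fun x => -c * u x + (s x - f x)) = -c * (u ⬝ᵥ w) + (s ⬝ᵥ w - f ⬝ᵥ w) := by
  have h1 : ∀ x, w x * (-c * u x + (s x - f x))
      = -c * (u x * w x) + (s x * w x - f x * w x) := fun x => by ring
  simp only [dotProduct, h1, Finset.sum_add_distrib, Finset.sum_sub_distrib, ← Finset.mul_sum]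

lemma sumE_apply (L : Finset (Fin n)) (a : Fin n) (ha : a ∉ L) (x y : Fin n) :
    (∑ l ∈ L, E a l) x y
      = (if x = a then (if y ∈ L then (1:ℝ) else 0) else 0)
        + (if y = a then (if x ∈ L then (1:ℝ) else 0) else 0) := by
  rw [Matrix.sum_apply]
  by_cases hx : x = a <;> by_cases hy : y = a
  · have h0 : ∀ l ∈ L, E a l x y = 0 := by
      intro l hl
      have hal : ¬ (a = l) := fun h => ha (h ▸ hl)
      simp [E, hx, hy, hal]
    rw [Finset.sum_eq_zero h0]
    simp [hx, hy, ha]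
  · have h0 : ∀ l ∈ L, E a l x y = if y = l then (1:ℝ) else 0 := by
      intro l hl
      simp [E, hx, hy]
    rw [Finset.sum_congr rfl h0, Finset.sum_ite_eq L y (fun _ => (1:ℝ))]
    simp [hx, hy]
  · have h0 : ∀ l ∈ L, E a l x y = if x = l then (1:ℝ) else 0 := by
      intro l hl
      simp [E, hx, hy]
    rw [Finset.sum_congr rfl h0, Finset.sum_ite_eq L x (fun _ => (1:ℝ))]
    simp [hx, hy]
  · have h0 : ∀ l ∈ L, E a l x y = 0 := by
      intro l hl
      simp [E, hx, hy]
    rw [Finset.sum_eq_zero h0]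
    simp [hx, hy]

lemma dot_comb (p q α : Fin n → ℝ) (P Q : ℝ) :
    (fun x => P * p x + Q * q x) ⬝ᵥ α = P * (p ⬝ᵥ α) + Q * (q ⬝ᵥ α) := by
  simp only [dotProduct, Finset.mul_sum, ← Finset.sum_add_distrib]
  exact Finset.sum_congr rfl fun x _ => by ring

end Helpers

theorem stmt0 {n : ℕ} (G : Matrix (Fin n) (Fin n) ℝ) (hG : G.IsAdjMatrix)
    (i j : Fin n) (hij : i ≠ j)
    (hnest : Nbr G j \ {i} ⊂ Nbr G i \ {j})
    (L : Finset (Fin n)) (hLne : L.Nonempty)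
    (hL : ∀ l ∈ L, l ≠ i ∧ l ≠ j ∧ G i l = 0) :
    ∀ k : ℕ, 2 ≤ k →
      ∑ u, ∑ v, ((G + ∑ l ∈ L, E j l) ^ k) u v <
        ∑ u, ∑ v, ((G + ∑ l ∈ L, E i l) ^ k) u v := by
  classical
  intro k hk
  obtain ⟨K, rfl⟩ : ∃ K, k = K + 2 := ⟨k - 2, by omega⟩
  have hGsym : ∀ x y, G x y = G y x := by
    intro x y
    have h : Gᵀ = G := hG.symm
    conv_rhs => rw [← h]
    rfl
  have hG01 := hG.zero_or_one
  have hGdiag := hG.apply_diag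
  have hiL : i ∉ L := fun h => (hL i h).1 rfl
  have hjL : j ∉ L := fun h => (hL j h).2.1 rfl
  have hGiL : ∀ l ∈ L, G i l = 0 := fun l hl => (hL l hl).2.2
  have hnest1 : ∀ x, x ≠ i → G j x = 1 → (G i x = 1 ∧ x ≠ j) := by
    intro x hxi hjx
    have hx : x ∈ Nbr G j \ {i} := ⟨hjx, by simpa using hxi⟩
    have h2 := hnest.1 hx
    exact ⟨h2.1, by simpa using h2.2⟩
  have hGjL : ∀ l ∈ L, G j l = 0 := by
    intro l hl
    rcases hG01 j l with h | h
    · exact h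
    · have h2 := (hnest1 l (hL l hl).1 h).1
      rw [hGiL l hl] at h2
      exact absurd h2 (by norm_num)
  obtain ⟨x0, hx0mem, hx0not⟩ := Set.exists_of_ssubset hnest
  have hx0i : G i x0 = 1 := hx0mem.1
  have hx0j : x0 ≠ j := by simpa using hx0mem.2
  have hx0ne_i : x0 ≠ i := by
    intro h
    rw [h, hGdiag i] at hx0i
    norm_num at hx0i
  have hx0jval : G j x0 = 0 := by
    rcases hG01 j x0 with h | h
    · exact h
    · exact absurd (⟨h, by simpa using hx0ne_i⟩ : x0 ∈ Nbr G j \ {i}) hx0not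
  set fV : Fin n → ℝ := fun x => if x ∈ L then 1 else 0 with hfVdef
  set sV : Fin n → ℝ := fun x => if (x ≠ i ∧ x ≠ j ∧ G i x = 1 ∧ G j x = 0) then 1 else 0
    with hsVdef
  set uV : Fin n → ℝ := fun x => (if x = i then 1 else 0) - (if x = j then 1 else 0) with huVdef
  set c : ℝ := G i j with hcdef
  set A : Matrix (Fin n) (Fin n) ℝ := G + ∑ l ∈ L, E i l with hAdef
  set B : Matrix (Fin n) (Fin n) ℝ := G + ∑ l ∈ L, E j l with hBdef
  have hfV01 : ∀ x, fV x = 0 ∨ fV x = 1 := by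
    intro x; by_cases h : x ∈ L <;> simp [hfVdef, h]
  have hfVnn : ∀ x, 0 ≤ fV x := fun x => by rcases hfV01 x with h | h <;> simp [h]
  have hfVi : fV i = 0 := by simp [hfVdef, hiL]
  have hfVj : fV j = 0 := by simp [hfVdef, hjL]
  have hsV01 : ∀ x, sV x = 0 ∨ sV x = 1 := by
    intro x
    by_cases h : (x ≠ i ∧ x ≠ j ∧ G i x = 1 ∧ G j x = 0) <;> simp [hsVdef, h]
  have hsVnn : ∀ x, 0 ≤ sV x := fun x => by rcases hsV01 x with h | h <;> simp [h]
  have hsVi : sV i = 0 := by simp [hsVdef]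
  have hsVj : sV j = 0 := by simp [hsVdef]
  have hAap : ∀ x y, A x y
      = G x y + ((if x = i then fV y else 0) + (if y = i then fV x else 0)) := by
    intro x y
    rw [hAdef, Matrix.add_apply, sumE_apply L i hiL x y]
  have hBap : ∀ x y, B x y
      = G x y + ((if x = j then fV y else 0) + (if y = j then fV x else 0)) := by
    intro x y
    rw [hBdef, Matrix.add_apply, sumE_apply L j hjL x y]
  have hAsym' : ∀ x y, A x y = A y x := by
    intro x y; rw [hAap x y, hAap y x, hGsym x y]; ring
  have hBsym' : ∀ x y, B x y = B y x := by
    intro x y; rw [hBap x y, hBap y x, hGsym x y]; ring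
  have hA01 : ∀ x y, A x y = 0 ∨ A x y = 1 := by
    intro x y
    rw [hAap x y]
    by_cases hx : x = i <;> by_cases hy : y = i
    · rw [if_pos hx, if_pos hy, hx, hy, hfVi, hGdiag]
      norm_num
    · rw [if_pos hx, if_neg hy, hx]
      rcases hfV01 y with h | h
      · rw [h]
        simpa using hG01 i y
      · have hyL : y ∈ L := by
          by_contra hyL
          rw [hfVdef] at h
          simp [hyL] at h
        right
        rw [hGiL y hyL, h]
        norm_num
    · rw [if_neg hx, if_pos hy, hy]
      rcases hfV01 x with h | h
      · rw [h]
        simpa using hG01 x i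
      · have hxL : x ∈ L := by
          by_contra hxL
          rw [hfVdef] at h
          simp [hxL] at h
        right
        rw [hGsym x i, hGiL x hxL, h]
        norm_num
    · rw [if_neg hx, if_neg hy]
      simpa using hG01 x y
  have hB01 : ∀ x y, B x y = 0 ∨ B x y = 1 := by
    intro x y
    rw [hBap x y]
    by_cases hx : x = j <;> by_cases hy : y = j
    · rw [if_pos hx, if_pos hy, hx, hy, hfVj, hGdiag]
      norm_num
    · rw [if_pos hx, if_neg hy, hx]
      rcases hfV01 y with h | h
      · rw [h]
        simpa using hG01 j y
      · have hyL : y ∈ L := by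
          by_contra hyL
          rw [hfVdef] at h
          simp [hyL] at h
        right
        rw [hGjL y hyL, h]
        norm_num
    · rw [if_neg hx, if_pos hy, hy]
      rcases hfV01 x with h | h
      · rw [h]
        simpa using hG01 x j
      · have hxL : x ∈ L := by
          by_contra hxL
          rw [hfVdef] at h
          simp [hxL] at h
        right
        rw [hGsym x j, hGjL x hxL, h]
        norm_num
    · rw [if_neg hx, if_neg hy]
      simpa using hG01 x y
  have hAnn : ∀ x y, 0 ≤ A x y := fun x y => by rcases hA01 x y with h | h <;> simp [h]
  have hBnn : ∀ x y, 0 ≤ B x y := fun x y => by rcases hB01 x y with h | h <;> simp [h]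
  have hAxi_s : ∀ x, sV x = 1 → A x i = 1 := by
    intro x hx
    have hcond : x ≠ i ∧ x ≠ j ∧ G i x = 1 ∧ G j x = 0 := by
      by_contra h
      rw [hsVdef] at hx
      simp only [if_neg h] at hx
      norm_num at hx
    obtain ⟨hxi, hxj, hGix, hGjx⟩ := hcond
    have hxL : x ∉ L := fun hxl => by rw [hGiL x hxl] at hGix; norm_num at hGix
    have hfx : fV x = 0 := by simp [hfVdef, hxL]
    rw [hAap x i, if_neg hxi, if_pos rfl, hfx, hGsym x i, hGix]
    ring
  have hAxi_f : ∀ x, fV x = 1 → A x i = 1 := by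
    intro x hx
    have hxL : x ∈ L := by
      by_contra hxL
      rw [hfVdef] at hx
      simp [hxL] at hx
    have hxi : x ≠ i := fun h => hiL (h ▸ hxL)
    rw [hAap x i, if_neg hxi, if_pos rfl, hx, hGsym x i, hGiL x hxL]
    ring
  have hBxj_f : ∀ x, fV x = 1 → B x j = 1 := by
    intro x hx
    have hxL : x ∈ L := by
      by_contra hxL
      rw [hfVdef] at hx
      simp [hxL] at hx
    have hxj : x ≠ j := fun h => hjL (h ▸ hxL)
    rw [hBap x j, if_neg hxj, if_pos rfl, hx, hGsym x j, hGjL x hxL]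
    ring
  have hsum_uV : ∀ (M : Matrix (Fin n) (Fin n) ℝ) (x : Fin n),
      (M *ᵥ uV) x = M x i - M x j := by
    intro M x
    rw [mulVec_apply']
    simp only [huVdef, mul_sub, mul_ite, mul_one, mul_zero, Finset.sum_sub_distrib,
      Finset.sum_ite_eq', Finset.mem_univ, if_true]
  have hkey : ∀ x, G x i - G x j = -c * uV x + sV x := by
    intro x
    by_cases hxi : x = i
    · subst hxi
      have huVi : uV x = 1 := by simp [huVdef, hij]
      rw [hGdiag, hsVi, huVi, hcdef]
      ring
    · by_cases hxj : x = j
      · subst hxj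
        have huVj : uV x = -1 := by simp [huVdef, Ne.symm hij]
        rw [hGdiag, hsVj, huVj, hcdef, hGsym x i]
        ring
      · have huVx : uV x = 0 := by simp [huVdef, hxi, hxj]
        rw [huVx, hGsym x i, hGsym x j]
        rcases hG01 i x with h1 | h1 <;> rcases hG01 j x with h2 | h2
        · have hs : sV x = 0 := by simp [hsVdef, h1]
          rw [h1, h2, hs]; ring
        · exfalso
          have h3 := (hnest1 x hxi h2).1
          rw [h1] at h3
          norm_num at h3
        · have hs : sV x = 1 := by simp [hsVdef, hxi, hxj, h1, h2]
          rw [h1, h2, hs]; ring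
        · have hs : sV x = 0 := by simp [hsVdef, h1, h2]
          rw [h1, h2, hs]; ring
  have hAuF : A *ᵥ uV = fun x => -c * uV x + (sV x + fV x) := by
    funext x
    rw [hsum_uV, hAap x i, hAap x j]
    have e1 : (if x = i then fV i else 0) = 0 := by rw [hfVi]; simp
    have e2 : (if x = i then fV j else 0) = 0 := by rw [hfVj]; simp
    have e3 : (if (i : Fin n) = i then fV x else 0) = fV x := if_pos rfl
    have e4 : (if (j : Fin n) = i then fV x else 0) = 0 := if_neg (Ne.symm hij)
    rw [e1, e2, e3, e4]
    have hk2 := hkey x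
    linarith
  have hBuF : B *ᵥ uV = fun x => -c * uV x + (sV x - fV x) := by
    funext x
    rw [hsum_uV, hBap x i, hBap x j]
    have e1 : (if x = j then fV i else 0) = 0 := by rw [hfVi]; simp
    have e2 : (if x = j then fV j else 0) = 0 := by rw [hfVj]; simp
    have e3 : (if (i : Fin n) = j then fV x else 0) = 0 := if_neg hij
    have e4 : (if (j : Fin n) = j then fV x else 0) = fV x := if_pos rfl
    rw [e1, e2, e3, e4]
    have hk2 := hkey x
    linarith
  set Sa : ℕ → ℝ := fun m => sV ⬝ᵥ ((A ^ m) *ᵥ onesV n) with hSadef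
  set Ga : ℕ → ℝ := fun m => fV ⬝ᵥ ((A ^ m) *ᵥ onesV n) with hGadef
  set Ph : ℕ → ℝ := fun m => fV ⬝ᵥ ((B ^ m) *ᵥ onesV n) with hPhdef
  set Sp : ℕ → ℝ := fun m => sV ⬝ᵥ ((B ^ m) *ᵥ onesV n) with hSpdef
  set Uq : ℕ → ℝ := fun m => uV ⬝ᵥ ((A ^ m) *ᵥ onesV n) with hUqdef
  set Pq : ℕ → ℝ := fun m => uV ⬝ᵥ ((B ^ m) *ᵥ onesV n) with hPqdef
  have dot_nn : ∀ (v w : Fin n → ℝ), (∀ x, 0 ≤ v x) → (∀ x, 0 ≤ w x) → 0 ≤ v ⬝ᵥ w :=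
    fun v w hv hw => Finset.sum_nonneg fun x _ => mul_nonneg (hv x) (hw x)
  have hSann : ∀ m, 0 ≤ Sa m := fun m => dot_nn _ _ hsVnn (pow_ones_nonneg A hAnn m)
  have hGann : ∀ m, 0 ≤ Ga m := fun m => dot_nn _ _ hfVnn (pow_ones_nonneg A hAnn m)
  have hPhnn : ∀ m, 0 ≤ Ph m := fun m => dot_nn _ _ hfVnn (pow_ones_nonneg B hBnn m)
  have hSpnn : ∀ m, 0 ≤ Sp m := fun m => dot_nn _ _ hsVnn (pow_ones_nonneg B hBnn m)
  have hSamono : ∀ m, Sa m ≤ Sa (m+1) := by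
    intro m
    simp only [hSadef, dotProduct]
    refine Finset.sum_le_sum fun x _ => ?_
    rcases hsV01 x with h | h
    · rw [h]; simp
    · rw [h, one_mul, one_mul]
      exact walk_mono A hA01 hAsym' m x ⟨i, hAxi_s x h⟩
  have hGamono : ∀ m, Ga m ≤ Ga (m+1) := by
    intro m
    simp only [hGadef, dotProduct]
    refine Finset.sum_le_sum fun x _ => ?_
    rcases hfV01 x with h | h
    · rw [h]; simp
    · rw [h, one_mul, one_mul]
      exact walk_mono A hA01 hAsym' m x ⟨i, hAxi_f x h⟩
  have hU0 : Uq 0 = 0 := by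
    simp only [hUqdef]
    rw [pow_zero, Matrix.one_mulVec]
    simp [dotProduct, huVdef, onesV, Finset.sum_sub_distrib]
  have hP0 : Pq 0 = 0 := by
    simp only [hPqdef]
    rw [pow_zero, Matrix.one_mulVec]
    simp [dotProduct, huVdef, onesV, Finset.sum_sub_distrib]
  have hUrec : ∀ m, Uq (m+1) = -c * Uq m + (Sa m + Ga m) := by
    intro m
    simp only [hUqdef, hSadef, hGadef]
    rw [pow_succ', ← Matrix.mulVec_mulVec, dot_swap A hAsym', hAuF, dot_expand]
  have hPrec : ∀ q, Pq (q+1) = -c * Pq q + (Sp q - Ph q) := by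
    intro q
    simp only [hPqdef, hSpdef, hPhdef]
    rw [pow_succ', ← Matrix.mulVec_mulVec, dot_swap B hBsym', hBuF, dot_expand']
  have hABdiff : ∀ x y, (A - B) x y = uV x * fV y + fV x * uV y := by
    intro x y
    rw [Matrix.sub_apply, hAap x y, hBap x y]
    simp only [huVdef, sub_mul, mul_sub, ite_mul, mul_ite, one_mul, zero_mul, mul_one, mul_zero]
    ring
  have hterm : ∀ (m b : ℕ), onesV n ⬝ᵥ ((A ^ m * (A - B) * B ^ b) *ᵥ onesV n)
      = Uq m * Ph b + Ga m * Pq b := by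
    intro m b
    have h1 : (A ^ m * (A - B) * B ^ b) *ᵥ onesV n
        = A ^ m *ᵥ ((A - B) *ᵥ (B ^ b *ᵥ onesV n)) := by
      rw [← Matrix.mulVec_mulVec, ← Matrix.mulVec_mulVec]
    have h2 : (A - B) *ᵥ (B ^ b *ᵥ onesV n)
        = fun x => (fV ⬝ᵥ (B ^ b *ᵥ onesV n)) * uV x + (uV ⬝ᵥ (B ^ b *ᵥ onesV n)) * fV x := by
      funext x
      rw [mulVec_apply']
      have h3 : ∀ y, (A - B) x y * (B ^ b *ᵥ onesV n) y
          = uV x * (fV y * (B ^ b *ᵥ onesV n) y) + fV x * (uV y * (B ^ b *ᵥ onesV n) y) := by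
        intro y; rw [hABdiff x y]; ring
      simp only [h3, Finset.sum_add_distrib, ← Finset.mul_sum]
      simp only [dotProduct]
      ring
    rw [h1, dot_swap _ (pow_symm A hAsym' m), h2]
    rw [dot_comb uV fV (A ^ m *ᵥ onesV n) (fV ⬝ᵥ (B ^ b *ᵥ onesV n)) (uV ⬝ᵥ (B ^ b *ᵥ onesV n))]
    simp only [hUqdef, hPhdef, hGadef, hPqdef]
    ring
  have hEdiff : ∀ t : ℕ, (onesV n ⬝ᵥ ((A ^ t) *ᵥ onesV n)) - (onesV n ⬝ᵥ ((B ^ t) *ᵥ onesV n))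
      = ∑ m ∈ Finset.range t, (Uq m * Ph (t-1-m) + Ga m * Pq (t-1-m)) := by
    intro t
    rw [← dotProduct_sub, ← Matrix.sub_mulVec, telescope A B t, sumMulVec, dot_sum]
    exact Finset.sum_congr rfl fun m _ => hterm m (t-1-m)
  set Ek : ℕ → ℝ := fun t => ∑ m ∈ Finset.range t, (Uq m * Ph (t-1-m) + Ga m * Pq (t-1-m))
    with hEkdef
  have hE0 : Ek 0 = 0 := by simp [hEkdef]
  have hErec : ∀ t, Ek (t+1)
      = -c * Ek t + ∑ m ∈ Finset.range t, (Sa m * Ph (t-1-m) + Ga m * Sp (t-1-m)) := by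
    intro t
    have h := rec_sum c Uq Pq Sa Ga Ph Sp hU0 hP0 hUrec hPrec t
    have hL1 : Ek (t+1) = ∑ m ∈ Finset.range (t+1), (Uq m * Ph (t-m) + Ga m * Pq (t-m)) := by
      simp only [hEkdef]
      exact Finset.sum_congr rfl fun m _ => by norm_num
    rw [hL1, h, hEkdef]
  have hc0 : 0 ≤ c := by rcases hG01 i j with h | h <;> rw [hcdef, h] <;> norm_num
  have hc1 : c ≤ 1 := by rcases hG01 i j with h | h <;> rw [hcdef, h] <;> norm_num
  have hkp := key_pos c hc0 hc1 Sa Ga Ph Sp Ek hSann hGann hPhnn hSpnn hSamono hGamono hE0 hErec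
  have hlow := (hkp K).1
  have hSa0 : (1:ℝ) ≤ Sa 0 := by
    have hx0s : sV x0 = 1 := by simp [hsVdef, hx0ne_i, hx0j, hx0i, hx0jval]
    simp only [hSadef]
    rw [pow_zero, Matrix.one_mulVec]
    have h1 : (1:ℝ) = sV x0 * (onesV n x0) := by simp [hx0s, onesV]
    rw [h1]
    exact Finset.single_le_sum
      (fun x _ => mul_nonneg (hsVnn x) (by simp [onesV])) (Finset.mem_univ x0)
  obtain ⟨l0, hl0⟩ := hLne
  have hPhK : (1:ℝ) ≤ Ph K := by
    have hfl0 : fV l0 = 1 := by simp [hfVdef, hl0]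
    have hB1 : B l0 j = 1 := hBxj_f l0 hfl0
    have hge := walk_ge_one B hB01 hBsym' K l0 ⟨j, hB1⟩
    simp only [hPhdef, dotProduct]
    calc (1:ℝ) ≤ (B ^ K *ᵥ onesV n) l0 := hge
      _ = fV l0 * (B ^ K *ᵥ onesV n) l0 := by rw [hfl0, one_mul]
      _ ≤ ∑ x, fV x * (B ^ K *ᵥ onesV n) x :=
          Finset.single_le_sum
            (fun x _ => mul_nonneg (hfVnn x) (pow_ones_nonneg B hBnn K x))
            (Finset.mem_univ l0)
  have hpos : 0 < Ek (K+2) := by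
    have h1 : (1:ℝ) ≤ Sa 0 * Ph K := by nlinarith
    linarith
  have hconv : ∀ (M : Matrix (Fin n) (Fin n) ℝ) (t : ℕ),
      (∑ u, ∑ v, (M ^ t) u v) = onesV n ⬝ᵥ ((M ^ t) *ᵥ onesV n) := by
    intro M t
    simp [dotProduct, mulVec_apply', onesV]
  rw [hconv B (K+2), hconv A (K+2)]
  have hEk2 : (onesV n ⬝ᵥ ((A ^ (K+2)) *ᵥ onesV n))
      - (onesV n ⬝ᵥ ((B ^ (K+2)) *ᵥ onesV n)) = Ek (K+2) := by
    rw [hEdiff (K+2), hEkdef]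
  linarith
end

section
/- Every extreme point of the convex set S_w of feasible weighted network formation paths is a path of unweighted networks: if s = (G(t))_{t=1}^T ∈ S_w and some G(t) has an entry strictly between 0 and 1 in at least two distinct (unordered) positions, then s is not an extreme point of S_w. -/
open Matrix BigOperators

/-- The network preceding period `k` along the path `s` (the empty network if `k = 0`). -/
def prevNet {T n : ℕ} (s : Fin T → Matrix (Fin n) (Fin n) ℝ) (k : Fin T) :
    Matrix (Fin n) (Fin n) ℝ :=
  if k.val = 0 then 0 else s ⟨k.val - 1, lt_of_le_of_lt (Nat.sub_le _ _) k.isLt⟩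

/-- The set of feasible weighted network formation paths: starting from the empty
network, each period's network is symmetric with zero diagonal and entries in `[0,1]`,
dominates the previous one entrywise, and adds total weight `1'W1 = 2`. -/
def SW (T n : ℕ) : Set (Fin T → Matrix (Fin n) (Fin n) ℝ) :=
  {s | ∀ k : Fin T,
    (s k).IsSymm ∧ (∀ u, s k u u = 0) ∧ (∀ u v, 0 ≤ s k u v ∧ s k u v ≤ 1) ∧
    (∀ u v, prevNet s k u v ≤ s k u v) ∧
    (∑ u, ∑ v, (s k u v - prevNet s k u v)) = 2}

namespace Stmt15

variable {T n : ℕ}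

/-- unordered pairs -/
abbrev EP (n : ℕ) := {p : Fin n × Fin n // p.1 < p.2}

/-- index type -/
abbrev Idx (T n : ℕ) := Fin T ⊕ EP n

/-- partial sum of a period-indexed family up to period `m` -/
def psum (g : Fin T → ℝ) (m : ℕ) : ℝ :=
  ∑ t ∈ Finset.univ.filter (fun t : Fin T => (t : ℕ) ≤ m), g t

lemma psum_zero (g : Fin T → ℝ) (h : 0 < T) : psum g 0 = g ⟨0, h⟩ := by
  unfold psum
  rw [show Finset.univ.filter (fun t : Fin T => (t : ℕ) ≤ 0) = {(⟨0, h⟩ : Fin T)} by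
    ext t; simp [Fin.ext_iff, Nat.le_zero]]
  simp

lemma psum_succ (g : Fin T → ℝ) (m : ℕ) (h : m + 1 < T) :
    psum g (m + 1) = psum g m + g ⟨m + 1, h⟩ := by
  unfold psum
  rw [show Finset.univ.filter (fun t : Fin T => (t : ℕ) ≤ m + 1)
      = insert (⟨m + 1, h⟩ : Fin T) (Finset.univ.filter (fun t : Fin T => (t : ℕ) ≤ m)) by
    ext t; simp [Fin.ext_iff]; omega]
  rw [Finset.sum_insert (by simp)]
  ring

lemma psum_nonneg (g : Fin T → ℝ) (hg : ∀ t, 0 ≤ g t) (m : ℕ) : 0 ≤ psum g m :=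
  Finset.sum_nonneg fun t _ => hg t

lemma psum_mono (g : Fin T → ℝ) (hg : ∀ t, 0 ≤ g t) {m m' : ℕ} (h : m ≤ m') :
    psum g m ≤ psum g m' := by
  apply Finset.sum_le_sum_of_subset_of_nonneg
  · intro t ht; simp only [Finset.mem_filter] at *; exact ⟨ht.1, le_trans ht.2 h⟩
  · exact fun t _ _ => hg t

lemma psum_le_total (g : Fin T → ℝ) (hg : ∀ t, 0 ≤ g t) (m : ℕ) :
    psum g m ≤ ∑ t, g t := by
  apply Finset.sum_le_sum_of_subset_of_nonneg (Finset.filter_subset _ _)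
  exact fun t _ _ => hg t

lemma psum_total (g : Fin T → ℝ) {m : ℕ} (h : ∀ t : Fin T, (t : ℕ) ≤ m) :
    psum g m = ∑ t, g t := by
  unfold psum
  rw [Finset.filter_true_of_mem fun t _ => h t]

lemma psum_sum {γ : Type*} (S : Finset γ) (c : γ → ℝ) (g : γ → Fin T → ℝ) (m : ℕ) :
    psum (fun t => ∑ i ∈ S, c i * g i t) m = ∑ i ∈ S, c i * psum (g i) m := by
  unfold psum
  rw [Finset.sum_comm]
  simp [Finset.mul_sum]

def symExt (g : EP n → ℝ) : Matrix (Fin n) (Fin n) ℝ :=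
  fun u v => if h : u < v then g ⟨(u, v), h⟩ else if h : v < u then g ⟨(v, u), h⟩ else 0

lemma symExt_apply_lt (g : EP n → ℝ) {u v : Fin n} (h : u < v) :
    symExt g u v = g ⟨(u, v), h⟩ := by simp [symExt, h]

lemma symExt_symm (g : EP n → ℝ) (u v : Fin n) : symExt g v u = symExt g u v := by
  rcases lt_trichotomy u v with h | h | h
  · simp [symExt, h, asymm h]
  · simp [symExt, h, lt_irrefl]
  · simp [symExt, h, asymm h]

lemma symExt_diag (g : EP n → ℝ) (u : Fin n) : symExt g u u = 0 := by
  simp [symExt, lt_irrefl]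

lemma sum_symExt (g : EP n → ℝ) :
    ∑ u, ∑ v, symExt g u v = 2 * ∑ e : EP n, g e := by
  have key : ∑ p ∈ Finset.univ.filter (fun p : Fin n × Fin n => p.1 < p.2), symExt g p.1 p.2
        = ∑ e : EP n, g e := by
    rw [Finset.sum_subtype (Finset.univ.filter (fun p : Fin n × Fin n => p.1 < p.2))
      (p := fun p : Fin n × Fin n => p.1 < p.2) (by simp) (fun p => symExt g p.1 p.2)]
    exact Finset.sum_congr rfl fun e _ => by rw [symExt_apply_lt g e.2]
  have hswap : ∑ p ∈ Finset.univ.filter (fun p : Fin n × Fin n => p.2 < p.1), symExt g p.1 p.2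
      = ∑ p ∈ Finset.univ.filter (fun p : Fin n × Fin n => p.1 < p.2), symExt g p.1 p.2 := by
    apply Finset.sum_nbij' (fun p : Fin n × Fin n => (p.2, p.1)) (fun p : Fin n × Fin n => (p.2, p.1))
    · intro p hp; simp only [Finset.mem_filter, Finset.mem_univ, true_and] at hp ⊢; exact hp
    · intro p hp; simp only [Finset.mem_filter, Finset.mem_univ, true_and] at hp ⊢; exact hp
    · intro p _; rfl
    · intro p _; rfl
    · intro p _; exact symExt_symm g p.2 p.1
  have hgt : ∑ p ∈ Finset.univ.filter (fun p : Fin n × Fin n => ¬ p.1 < p.2), symExt g p.1 p.2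
      = ∑ p ∈ Finset.univ.filter (fun p : Fin n × Fin n => p.2 < p.1), symExt g p.1 p.2 := by
    symm
    apply Finset.sum_subset
    · intro p hp; simp only [Finset.mem_filter, Finset.mem_univ, true_and] at hp ⊢
      exact asymm hp
    · intro p hp hp2
      simp only [Finset.mem_filter, Finset.mem_univ, true_and, not_lt] at hp hp2
      have hpe : p.1 = p.2 := le_antisymm hp2 hp
      rw [show symExt g p.1 p.2 = symExt g p.2 p.2 by rw [hpe]]
      exact symExt_diag g p.2
  have hsplit := Finset.sum_filter_add_sum_filter_not (Finset.univ : Finset (Fin n × Fin n))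
    (fun p => p.1 < p.2) (fun p => symExt g p.1 p.2)
  have : ∑ u, ∑ v, symExt g u v = ∑ p : Fin n × Fin n, symExt g p.1 p.2 :=
    (Fintype.sum_prod_type (f := fun p : Fin n × Fin n => symExt g p.1 p.2)).symm
  rw [this, ← hsplit, hgt, hswap, key]; ring


/-- per-period increment at an unordered pair -/
def inc (s : Fin T → Matrix (Fin n) (Fin n) ℝ) (t : Fin T) (e : EP n) : ℝ :=
  s t e.1.1 e.1.2 - prevNet s t e.1.1 e.1.2

/-- total increment (final cumulative value) at a pair -/
def tot (s : Fin T → Matrix (Fin n) (Fin n) ℝ) (e : EP n) : ℝ := ∑ t, inc s t e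

lemma psum_inc (s : Fin T → Matrix (Fin n) (Fin n) ℝ) (e : EP n) :
    ∀ (m : ℕ) (h : m < T), psum (fun t => inc s t e) m = s ⟨m, h⟩ e.1.1 e.1.2 := by
  intro m
  induction m with
  | zero =>
    intro h
    rw [psum_zero _ h]
    simp [inc, prevNet]
  | succ m ih =>
    intro h
    rw [psum_succ _ m h, ih (Nat.lt_of_succ_lt h)]
    simp only [inc, prevNet]
    rw [if_neg (by omega)]
    simp only [Nat.add_sub_cancel]
    ring

section withSW

variable (s : Fin T → Matrix (Fin n) (Fin n) ℝ)

lemma prevNet_symm (hs : s ∈ SW T n) (t : Fin T) (u v : Fin n) :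
    prevNet s t u v = prevNet s t v u := by
  unfold prevNet
  split
  · rfl
  · exact ((hs _).1.apply u v).symm

lemma prevNet_diag (hs : s ∈ SW T n) (t : Fin T) (u : Fin n) : prevNet s t u u = 0 := by
  unfold prevNet
  split
  · rfl
  · exact (hs _).2.1 u

lemma inc_nonneg (hs : s ∈ SW T n) (t : Fin T) (e : EP n) : 0 ≤ inc s t e :=
  sub_nonneg.2 ((hs t).2.2.2.1 e.1.1 e.1.2)

lemma inc_le_one (hs : s ∈ SW T n) (t : Fin T) (e : EP n) : inc s t e ≤ 1 := by
  have h1 : s t e.1.1 e.1.2 ≤ 1 := ((hs t).2.2.1 e.1.1 e.1.2).2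
  have h2 : 0 ≤ prevNet s t e.1.1 e.1.2 := by
    unfold prevNet
    split
    · simp
    · exact ((hs _).2.2.1 e.1.1 e.1.2).1
  unfold inc; linarith

/-- the increment matrix is the symmetric extension of `inc` -/
lemma inc_matrix (hs : s ∈ SW T n) (t : Fin T) (u v : Fin n) :
    s t u v - prevNet s t u v = symExt (fun e => inc s t e) u v := by
  rcases lt_trichotomy u v with h | h | h
  · rw [symExt_apply_lt _ h]; rfl
  · subst h
    rw [symExt_diag, (hs t).2.1 u, prevNet_diag s hs t u]; ring
  · rw [← symExt_symm, symExt_apply_lt _ h]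
    unfold inc
    rw [(hs t).1.apply u v, prevNet_symm s hs t u v]

lemma sum_inc (hs : s ∈ SW T n) (t : Fin T) : ∑ e : EP n, inc s t e = 1 := by
  have h2 := (hs t).2.2.2.2
  have : ∑ u, ∑ v, (s t u v - prevNet s t u v)
      = 2 * ∑ e : EP n, inc s t e := by
    rw [← sum_symExt]
    exact Finset.sum_congr rfl fun u _ => Finset.sum_congr rfl fun v _ =>
      inc_matrix s hs t u v
  rw [this] at h2; linarith

lemma tot_nonneg (hs : s ∈ SW T n) (e : EP n) : 0 ≤ tot s e :=
  Finset.sum_nonneg fun t _ => inc_nonneg s hs t e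

lemma tot_le_one (hs : s ∈ SW T n) (hT : 0 < T) (e : EP n) : tot s e ≤ 1 := by
  have h1 : psum (fun t => inc s t e) (T - 1) = ∑ t, inc s t e :=
    psum_total _ (fun t => by omega)
  have h2 := psum_inc s e (T - 1) (by omega)
  have := ((hs ⟨T - 1, by omega⟩).2.2.1 e.1.1 e.1.2).2
  unfold tot
  rw [← h1, h2]
  exact this

end withSW

/-- the doubly stochastic extension of the increment table -/
noncomputable def DD (s : Fin T → Matrix (Fin n) (Fin n) ℝ) : Matrix (Idx T n) (Idx T n) ℝ
  | .inl _, .inl _ => 0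
  | .inl t, .inr e => inc s t e
  | .inr e, .inl _ => tot s e / T
  | .inr e, .inr e' => if e = e' then 1 - tot s e else 0

lemma DD_mem (s : Fin T → Matrix (Fin n) (Fin n) ℝ) (hs : s ∈ SW T n) (hT : 0 < T) :
    DD s ∈ doublyStochastic ℝ (Idx T n) := by
  rw [mem_doublyStochastic_iff_sum]
  have hTR : (0 : ℝ) < T := by exact_mod_cast hT
  refine ⟨?_, ?_, ?_⟩
  · rintro (t | e) (t' | e')
    · exact le_refl 0
    · exact inc_nonneg s hs t e'
    · exact div_nonneg (tot_nonneg s hs e) hTR.le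
    · dsimp [DD]
      split
      · linarith [tot_le_one s hs hT e]
      · exact le_refl 0
  · rintro (t | e)
    · rw [Fintype.sum_sum_type]
      simp only [DD]
      rw [sum_inc s hs t]
      simp
    · rw [Fintype.sum_sum_type]
      simp only [DD]
      rw [Finset.sum_const, Finset.sum_ite_eq]
      simp only [Finset.mem_univ, if_true, Finset.card_univ, Fintype.card_fin, nsmul_eq_mul]
      field_simp
      ring
  · rintro (t | e)
    · rw [Fintype.sum_sum_type]
      simp only [DD]
      have : ∑ e : EP n, tot s e / (T : ℝ) = (∑ e : EP n, tot s e) / T := by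
        rw [Finset.sum_div]
      rw [this]
      have htot : ∑ e : EP n, tot s e = (T : ℝ) := by
        unfold tot
        rw [Finset.sum_comm]
        simp only [sum_inc s hs]
        simp
      rw [htot]
      field_simp
      simp
    · rw [Fintype.sum_sum_type]
      simp only [DD]
      rw [Finset.sum_ite_eq']
      simp only [Finset.mem_univ, if_true]
      unfold tot
      ring

/-- cumulative network at (ℕ-indexed) period `m` built from a matrix on `Idx` -/
noncomputable def PhiAux (M : Matrix (Idx T n) (Idx T n) ℝ) (m : ℕ) :
    Matrix (Fin n) (Fin n) ℝ :=
  symExt (fun e => psum (fun t' => M (.inl t') (.inr e)) m)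

/-- the path of cumulative networks built from a matrix on `Idx` -/
noncomputable def Phi (M : Matrix (Idx T n) (Idx T n) ℝ) :
    Fin T → Matrix (Fin n) (Fin n) ℝ :=
  fun t => PhiAux M t.val

lemma prevNet_Phi (M : Matrix (Idx T n) (Idx T n) ℝ) (t : Fin T) (ht : t.val ≠ 0) :
    prevNet (Phi M) t = PhiAux M (t.val - 1) := by
  unfold prevNet
  rw [if_neg ht]
  rfl

lemma Phi_inc (M : Matrix (Idx T n) (Idx T n) ℝ) (t : Fin T) (u v : Fin n) :
    Phi M t u v - prevNet (Phi M) t u v = symExt (fun e => M (.inl t) (.inr e)) u v := by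
  rcases Nat.eq_zero_or_pos t.val with ht | ht
  · have h0 : prevNet (Phi M) t = 0 := by unfold prevNet; rw [if_pos ht]
    rw [h0]
    have ht' : t = ⟨0, t.pos⟩ := Fin.ext ht
    rcases lt_trichotomy u v with h | h | h
    · rw [show (0 : Matrix (Fin n) (Fin n) ℝ) u v = 0 from rfl]
      unfold Phi PhiAux
      rw [symExt_apply_lt _ h, symExt_apply_lt _ h, ht, psum_zero _ t.pos, ← ht']
      ring
    · subst h
      unfold Phi PhiAux
      rw [symExt_diag, symExt_diag]
      simp
    · unfold Phi PhiAux
      rw [← symExt_symm, ← symExt_symm (fun e => M (.inl t) (.inr e)),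
        symExt_apply_lt _ h, symExt_apply_lt _ h, ht, psum_zero _ t.pos, ← ht']
      simp
  · obtain ⟨m, hm⟩ : ∃ m, t.val = m + 1 := ⟨t.val - 1, by omega⟩
    rw [prevNet_Phi M t (by omega)]
    have hmT : m + 1 < T := by rw [← hm]; exact t.isLt
    rcases lt_trichotomy u v with h | h | h
    · unfold Phi PhiAux
      rw [symExt_apply_lt _ h, symExt_apply_lt _ h, symExt_apply_lt _ h, hm]
      rw [psum_succ _ m hmT]
      have : (⟨m + 1, hmT⟩ : Fin T) = t := Fin.ext hm.symm
      rw [this]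
      simp
    · subst h
      unfold Phi PhiAux
      rw [symExt_diag, symExt_diag, symExt_diag]
      ring
    · unfold Phi PhiAux
      rw [← symExt_symm, ← symExt_symm (fun e => psum _ (t.val - 1)),
        ← symExt_symm (fun e => M (.inl t) (.inr e)),
        symExt_apply_lt _ h, symExt_apply_lt _ h, symExt_apply_lt _ h, hm]
      rw [psum_succ _ m hmT]
      have : (⟨m + 1, hmT⟩ : Fin T) = t := Fin.ext hm.symm
      rw [this]
      simp

lemma Phi_mem_SW (M : Matrix (Idx T n) (Idx T n) ℝ)
    (hM : M ∈ doublyStochastic ℝ (Idx T n))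
    (hM0 : ∀ t t' : Fin T, M (.inl t) (.inl t') = 0) :
    Phi M ∈ SW T n := by
  rw [mem_doublyStochastic_iff_sum] at hM
  obtain ⟨hpos, hrow, hcol⟩ := hM
  have hcolle : ∀ (e : EP n) (m : ℕ),
      psum (fun t' => M (.inl t') (.inr e)) m ≤ 1 := by
    intro e m
    have h1 : psum (fun t' => M (.inl t') (.inr e)) m ≤ ∑ t', M (.inl t') (.inr e) :=
      psum_le_total _ (fun t' => hpos _ _) m
    have h2 : ∑ t', M (.inl t') (.inr e) ≤ ∑ i, M i (.inr e) := by
      rw [Fintype.sum_sum_type]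
      have : (0:ℝ) ≤ ∑ e' : EP n, M (.inr e') (.inr e) :=
        Finset.sum_nonneg fun e' _ => hpos _ _
      linarith
    rw [hcol] at h2
    linarith
  have hentry : ∀ (t : Fin T) (u v : Fin n), 0 ≤ Phi M t u v ∧ Phi M t u v ≤ 1 := by
    intro t u v
    unfold Phi PhiAux
    rcases lt_trichotomy u v with h | h | h
    · rw [symExt_apply_lt _ h]
      exact ⟨psum_nonneg _ (fun t' => hpos _ _) _, hcolle _ _⟩
    · subst h; rw [symExt_diag]; norm_num
    · rw [← symExt_symm, symExt_apply_lt _ h]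
      exact ⟨psum_nonneg _ (fun t' => hpos _ _) _, hcolle _ _⟩
  intro t
  refine ⟨?_, ?_, hentry t, ?_, ?_⟩
  · -- symmetric
    unfold Matrix.IsSymm
    apply Matrix.ext
    intro u v
    rw [Matrix.transpose_apply]
    simp only [Phi, PhiAux]
    exact symExt_symm _ u v
  · intro u
    simp only [Phi, PhiAux]
    exact symExt_diag _ u
  · -- monotone
    intro u v
    rcases Nat.eq_zero_or_pos t.val with ht | ht
    · have h0 : prevNet (Phi M) t = 0 := by unfold prevNet; rw [if_pos ht]
      rw [h0]
      show (0:ℝ) ≤ Phi M t u v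
      exact (hentry t u v).1
    · rw [prevNet_Phi M t (by omega)]
      simp only [Phi, PhiAux]
      rcases lt_trichotomy u v with h | h | h
      · rw [symExt_apply_lt _ h, symExt_apply_lt _ h]
        exact psum_mono _ (fun t' => hpos _ _) (Nat.sub_le _ _)
      · subst h; rw [symExt_diag, symExt_diag]
      · rw [← symExt_symm, ← symExt_symm (g := fun e => psum (fun t' => M (.inl t') (.inr e)) t.val),
          symExt_apply_lt _ h, symExt_apply_lt _ h]
        exact psum_mono _ (fun t' => hpos _ _) (Nat.sub_le _ _)
  · -- sum of increments equals 2
    have : ∀ u v : Fin n, Phi M t u v - prevNet (Phi M) t u v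
        = symExt (fun e => M (.inl t) (.inr e)) u v := Phi_inc M t
    calc ∑ u, ∑ v, (Phi M t u v - prevNet (Phi M) t u v)
        = ∑ u, ∑ v, symExt (fun e => M (.inl t) (.inr e)) u v :=
          Finset.sum_congr rfl fun u _ => Finset.sum_congr rfl fun v _ => this u v
      _ = 2 * ∑ e : EP n, M (.inl t) (.inr e) := sum_symExt _
      _ = 2 := by
          have h2 : ∑ e : EP n, M (.inl t) (.inr e) = 1 := by
            have := hrow (.inl t)
            rw [Fintype.sum_sum_type] at this
            simp only [hM0] at this
            simpa using this
          rw [h2]; norm_num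

lemma Phi_DD (s : Fin T → Matrix (Fin n) (Fin n) ℝ) (hs : s ∈ SW T n) :
    Phi (DD s) = s := by
  funext t
  apply Matrix.ext
  intro u v
  have key : ∀ e : EP n,
      psum (fun t' => DD s (.inl t') (.inr e)) t.val = s t e.1.1 e.1.2 := by
    intro e
    have : (fun t' => DD s (.inl t') (.inr e)) = fun t' => inc s t' e := rfl
    rw [this, psum_inc s e t.val t.isLt]
  rcases lt_trichotomy u v with h | h | h
  · simp only [Phi, PhiAux]
    rw [symExt_apply_lt _ h, key]
  · subst h
    simp only [Phi, PhiAux]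
    rw [symExt_diag, (hs t).2.1 u]
  · simp only [Phi, PhiAux]
    rw [← symExt_symm, symExt_apply_lt _ h, key]
    show s t v u = s t u v
    exact (hs t).1.apply u v

lemma Phi_sum {γ : Type*} (S : Finset γ) (c : γ → ℝ) (P : γ → Matrix (Idx T n) (Idx T n) ℝ) :
    Phi (∑ i ∈ S, c i • P i) = ∑ i ∈ S, c i • Phi (P i) := by
  funext t
  apply Matrix.ext
  intro u v
  simp only [Finset.sum_apply, Matrix.sum_apply, Pi.smul_apply, Matrix.smul_apply,
    smul_eq_mul, Phi, PhiAux, symExt]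
  split_ifs with h h'
  · exact psum_sum S c _ t.val
  · exact psum_sum S c _ t.val
  · simp

lemma prevNet_sum {γ : Type*} (S : Finset γ) (c : γ → ℝ)
    (p : γ → (Fin T → Matrix (Fin n) (Fin n) ℝ)) (t : Fin T) (u v : Fin n) :
    prevNet (∑ i ∈ S, c i • p i) t u v = ∑ i ∈ S, c i * prevNet (p i) t u v := by
  unfold prevNet
  split
  · simp
  · simp [Finset.sum_apply, Matrix.sum_apply, Matrix.smul_apply]

lemma prevNet_combo (a b : ℝ) (p q : Fin T → Matrix (Fin n) (Fin n) ℝ) (t : Fin T)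
    (u v : Fin n) :
    prevNet (a • p + b • q) t u v = a * prevNet p t u v + b * prevNet q t u v := by
  unfold prevNet
  split
  · simp
  · simp [Matrix.add_apply, Matrix.smul_apply]

lemma convex_SW : Convex ℝ (SW T n) := by
  intro p hp q hq a b ha hb hab
  intro t
  obtain ⟨hp1, hp2, hp3, hp4, hp5⟩ := hp t
  obtain ⟨hq1, hq2, hq3, hq4, hq5⟩ := hq t
  have happ : ∀ u v : Fin n, (a • p + b • q) t u v = a * p t u v + b * q t u v := by
    intro u v
    simp [Matrix.add_apply, Matrix.smul_apply]
  refine ⟨?_, ?_, ?_, ?_, ?_⟩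
  · apply Matrix.ext
    intro u v
    rw [Matrix.transpose_apply, happ, happ]
    rw [hp1.apply u v, hq1.apply u v]
  · intro u
    rw [happ, hp2 u, hq2 u]; ring
  · intro u v
    rw [happ]
    constructor
    · have := (hp3 u v).1; have := (hq3 u v).1
      positivity
    · nlinarith [(hp3 u v).2, (hq3 u v).2, (hp3 u v).1, (hq3 u v).1]
  · intro u v
    rw [happ, prevNet_combo]
    have := hp4 u v; have := hq4 u v
    nlinarith
  · have : ∀ u v : Fin n, (a • p + b • q) t u v - prevNet (a • p + b • q) t u v
        = a * (p t u v - prevNet p t u v) + b * (q t u v - prevNet q t u v) := by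
      intro u v
      rw [happ, prevNet_combo]; ring
    calc ∑ u, ∑ v, ((a • p + b • q) t u v - prevNet (a • p + b • q) t u v)
        = ∑ u, ∑ v, (a * (p t u v - prevNet p t u v) + b * (q t u v - prevNet q t u v)) :=
          Finset.sum_congr rfl fun u _ => Finset.sum_congr rfl fun v _ => this u v
      _ = a * (∑ u, ∑ v, (p t u v - prevNet p t u v))
          + b * (∑ u, ∑ v, (q t u v - prevNet q t u v)) := by
          rw [Finset.mul_sum, Finset.mul_sum, ← Finset.sum_add_distrib]
          refine Finset.sum_congr rfl fun u _ => ?_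
          rw [Finset.mul_sum, Finset.mul_sum, ← Finset.sum_add_distrib]
      _ = 2 := by rw [hp5, hq5]; linarith

lemma permMatrix_apply (π : Equiv.Perm (Idx T n)) (i j : Idx T n) :
    (π.permMatrix ℝ) i j = if π i = j then 1 else 0 := by
  simp [Equiv.Perm.permMatrix, PEquiv.toMatrix_apply, Equiv.toPEquiv_apply]

end Stmt15

open Stmt15 in
theorem stmt15' {T n : ℕ} (s : Fin T → Matrix (Fin n) (Fin n) ℝ) (hs : s ∈ SW T n)
    (k : Fin T) (u v : Fin n)
    (h1 : 0 < s k u v) (h2 : s k u v < 1) :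
    s ∉ Set.extremePoints ℝ (SW T n) := by
  intro hext
  have hT : 0 < T := k.pos
  have huv : u ≠ v := by
    rintro rfl
    rw [(hs k).2.1 u] at h1
    exact lt_irrefl 0 h1
  obtain ⟨u₀, v₀, h₀, he1, he2⟩ :
      ∃ (u₀ v₀ : Fin n) (h₀ : u₀ < v₀), 0 < s k u₀ v₀ ∧ s k u₀ v₀ < 1 := by
    rcases lt_or_gt_of_ne huv with h | h
    · exact ⟨u, v, h, h1, h2⟩
    · refine ⟨v, u, h, ?_, ?_⟩
      · rwa [← (hs k).1.apply u v] at h1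
      · rwa [← (hs k).1.apply u v] at h2
  set e₀ : EP n := ⟨(u₀, v₀), h₀⟩ with he₀
  -- find a fractional increment
  obtain ⟨a, ha0, ha1⟩ : ∃ a : Fin T, 0 < inc s a e₀ ∧ inc s a e₀ < 1 := by
    by_contra hcon
    push_neg at hcon
    have h01 : ∀ t : Fin T, inc s t e₀ = 0 ∨ inc s t e₀ = 1 := by
      intro t
      rcases eq_or_lt_of_le (inc_nonneg s hs t e₀) with h | h
      · exact Or.inl h.symm
      · exact Or.inr (le_antisymm (inc_le_one s hs t e₀) (hcon t h))
    have hnat : ∀ m : ℕ, m < T → ∃ N : ℕ, psum (fun t => inc s t e₀) m = N := by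
      intro m
      induction m with
      | zero =>
        intro h
        rw [psum_zero _ hT]
        rcases h01 ⟨0, hT⟩ with h' | h'
        · exact ⟨0, by rw [h']; simp⟩
        · exact ⟨1, by rw [h']; simp⟩
      | succ m ih =>
        intro h
        obtain ⟨N, hN⟩ := ih (by omega)
        rw [psum_succ _ m h]
        rcases h01 ⟨m + 1, h⟩ with h' | h'
        · exact ⟨N, by rw [hN, h']; ring⟩
        · exact ⟨N + 1, by rw [hN, h']; push_cast; ring⟩
    obtain ⟨N, hN⟩ := hnat k.val k.isLt
    rw [psum_inc s e₀ k.val k.isLt] at hN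
    have hk : (⟨k.val, k.isLt⟩ : Fin T) = k := Fin.ext rfl
    rw [hk] at hN
    have hN1 : (0 : ℝ) < N := by rw [← hN]; exact he1
    have hN2 : (N : ℝ) < 1 := by rw [← hN]; exact he2
    have : 0 < N := by exact_mod_cast hN1
    have : N < 1 := by exact_mod_cast hN2
    omega
  -- Birkhoff decomposition of the doubly stochastic extension
  obtain ⟨c, hc0, hc1, hcD⟩ := exists_eq_sum_perm_of_mem_doublyStochastic (DD_mem s hs hT)
  have hDsum : ∀ i j, DD s i j = ∑ π : Equiv.Perm (Idx T n), c π * (π.permMatrix ℝ) i j := by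
    intro i j
    rw [← hcD]
    simp [Matrix.sum_apply, Matrix.smul_apply]
  -- support of the decomposition avoids the period-period block
  have hsupp : ∀ π : Equiv.Perm (Idx T n), c π ≠ 0 →
      ∀ t t' : Fin T, (π.permMatrix ℝ) (.inl t) (.inl t') = 0 := by
    intro π hπ t t'
    have h0 : ∑ π' : Equiv.Perm (Idx T n), c π' * (π'.permMatrix ℝ) (.inl t) (.inl t') = 0 := by
      rw [← hDsum]; rfl
    have hnn : ∀ π' ∈ (Finset.univ : Finset (Equiv.Perm (Idx T n))),
        0 ≤ c π' * (π'.permMatrix ℝ) (.inl t) (.inl t') := by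
      intro π' _
      apply mul_nonneg (hc0 π')
      rw [permMatrix_apply]
      split <;> norm_num
    have := (Finset.sum_eq_zero_iff_of_nonneg hnn).1 h0 π (Finset.mem_univ π)
    rcases mul_eq_zero.1 this with h | h
    · exact absurd h hπ
    · exact h
  -- split permutations according to the value at the fractional cell
  set Sc : Finset (Equiv.Perm (Idx T n)) := Finset.univ.filter (fun π => c π ≠ 0) with hSc
  set A : Finset (Equiv.Perm (Idx T n)) :=
    Sc.filter (fun π => π (.inl a) = .inr e₀) with hA
  set B : Finset (Equiv.Perm (Idx T n)) :=
    Sc.filter (fun π => ¬ π (.inl a) = .inr e₀) with hB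
  set μ : ℝ := ∑ π ∈ A, c π with hμdef
  have hμ : μ = inc s a e₀ := by
    have hDae : inc s a e₀ = DD s (.inl a) (.inr e₀) := rfl
    rw [hμdef, hDae, hDsum]
    have hstep : ∑ π : Equiv.Perm (Idx T n), c π * (π.permMatrix ℝ) (.inl a) (.inr e₀)
        = ∑ π : Equiv.Perm (Idx T n),
            (if π (.inl a) = (.inr e₀ : Idx T n) then c π else 0) := by
      refine Finset.sum_congr rfl fun π _ => ?_
      rw [permMatrix_apply, mul_ite, mul_one, mul_zero]
    rw [hstep, Finset.sum_ite, Finset.sum_const_zero, add_zero]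
    apply Finset.sum_subset
    · intro π hπ
      exact Finset.mem_filter.mpr ⟨Finset.mem_univ π, (Finset.mem_filter.mp hπ).2⟩
    · intro π hπ hπA
      by_contra hcπ
      exact hπA (Finset.mem_filter.mpr ⟨Finset.mem_filter.mpr ⟨Finset.mem_univ π, hcπ⟩,
        (Finset.mem_filter.mp hπ).2⟩)
  have hμ0 : 0 < μ := by rw [hμ]; exact ha0
  have hμ1 : μ < 1 := by rw [hμ]; exact ha1
  -- the two convex packets
  set x : Fin T → Matrix (Fin n) (Fin n) ℝ :=
    ∑ π ∈ A, (c π / μ) • Phi (π.permMatrix ℝ) with hx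
  set y : Fin T → Matrix (Fin n) (Fin n) ℝ :=
    ∑ π ∈ B, (c π / (1 - μ)) • Phi (π.permMatrix ℝ) with hy
  have hmemPhi : ∀ π ∈ Sc, Phi (Equiv.Perm.permMatrix ℝ π) ∈ SW T n := by
    intro π hπ
    rw [hSc, Finset.mem_filter] at hπ
    exact Phi_mem_SW _ permMatrix_mem_doublyStochastic (hsupp π hπ.2)
  have hScsum : ∑ π ∈ Sc, c π = 1 := by
    rw [← hc1]
    apply Finset.sum_subset
    · exact Finset.filter_subset _ _
    · intro π _ hπ
      rw [hSc, Finset.mem_filter] at hπ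
      push_neg at hπ
      exact hπ (Finset.mem_univ π)
  have hBsum : ∑ π ∈ B, c π = 1 - μ := by
    have := Finset.sum_filter_add_sum_filter_not Sc (fun π => π (.inl a) = .inr e₀) c
    rw [← hA, ← hB] at this
    rw [← hμdef] at this
    rw [hScsum] at this
    linarith
  have hxSW : x ∈ SW T n := by
    rw [hx]
    apply convex_SW.sum_mem
    · intro π _; exact div_nonneg (hc0 π) hμ0.le
    · rw [← Finset.sum_div, ← hμdef, div_self (ne_of_gt hμ0)]
    · intro π hπ
      exact hmemPhi π (Finset.filter_subset _ _ hπ)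
  have hySW : y ∈ SW T n := by
    rw [hy]
    apply convex_SW.sum_mem
    · intro π _
      exact div_nonneg (hc0 π) (by linarith)
    · rw [← Finset.sum_div, hBsum, div_self (by linarith)]
    · intro π hπ
      exact hmemPhi π (Finset.filter_subset _ _ hπ)
  -- s lies strictly between x and y
  have hcomb : μ • x + (1 - μ) • y = s := by
    have hμx : μ • x = ∑ π ∈ A, c π • Phi (π.permMatrix ℝ) := by
      rw [hx, Finset.smul_sum]
      refine Finset.sum_congr rfl fun π _ => ?_
      rw [smul_smul, mul_div_cancel₀ _ (ne_of_gt hμ0)]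
    have hμy : (1 - μ) • y = ∑ π ∈ B, c π • Phi (π.permMatrix ℝ) := by
      rw [hy, Finset.smul_sum]
      refine Finset.sum_congr rfl fun π _ => ?_
      rw [smul_smul, mul_div_cancel₀ _ (by linarith : (1:ℝ) - μ ≠ 0)]
    rw [hμx, hμy]
    have hsplit := Finset.sum_filter_add_sum_filter_not Sc
      (fun π => π (.inl a) = .inr e₀) (fun π => c π • Phi (π.permMatrix ℝ))
    rw [← hA, ← hB] at hsplit
    rw [hsplit]
    have hfull : ∑ π ∈ Sc, c π • Phi (π.permMatrix ℝ)
        = ∑ π : Equiv.Perm (Idx T n), c π • Phi (π.permMatrix ℝ) := by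
      apply Finset.sum_subset (Finset.filter_subset _ _)
      intro π _ hπ
      have hcπ : c π = 0 := by
        by_contra hcπ
        exact hπ (Finset.mem_filter.mpr ⟨Finset.mem_univ π, hcπ⟩)
      rw [hcπ, zero_smul]
    rw [hfull, ← Phi_sum, hcD, Phi_DD s hs]
  have hseg : s ∈ openSegment ℝ x y :=
    ⟨μ, 1 - μ, hμ0, by linarith, by ring, hcomb⟩
  have hxs : x = s := hext.2 hxSW hySW hseg
  -- contradiction via the increment at the fractional cell
  have hPhiInc : ∀ M : Matrix (Idx T n) (Idx T n) ℝ,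
      Phi M a u₀ v₀ - prevNet (Phi M) a u₀ v₀ = M (.inl a) (.inr e₀) := by
    intro M
    rw [Phi_inc M a u₀ v₀, symExt_apply_lt _ h₀]
  have hxinc : x a u₀ v₀ - prevNet x a u₀ v₀ = 1 := by
    have h1' : x a u₀ v₀ = ∑ π ∈ A, (c π / μ) * Phi (π.permMatrix ℝ) a u₀ v₀ := by
      rw [hx]
      simp [Finset.sum_apply, Matrix.sum_apply, Matrix.smul_apply]
    have h2' : prevNet x a u₀ v₀
        = ∑ π ∈ A, (c π / μ) * prevNet (Phi (π.permMatrix ℝ)) a u₀ v₀ := by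
      rw [hx, prevNet_sum]
    rw [h1', h2', ← Finset.sum_sub_distrib]
    have : ∀ π ∈ A, c π / μ * Phi (π.permMatrix ℝ) a u₀ v₀
        - c π / μ * prevNet (Phi (π.permMatrix ℝ)) a u₀ v₀ = c π / μ := by
      intro π hπ
      rw [← mul_sub, hPhiInc, permMatrix_apply]
      rw [hA, Finset.mem_filter] at hπ
      rw [if_pos hπ.2, mul_one]
    rw [Finset.sum_congr rfl this, ← Finset.sum_div, ← hμdef, div_self (ne_of_gt hμ0)]
  rw [hxs] at hxinc
  have : s a u₀ v₀ - prevNet s a u₀ v₀ = inc s a e₀ := rfl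
  rw [this] at hxinc
  rw [hxinc] at ha1
  exact lt_irrefl 1 ha1

/-- If a feasible path has, at some period, strictly fractional weight at two distinct
unordered positions, then it is not an extreme point of `S_w`; hence every extreme
point of `S_w` is a path of unweighted networks. -/
theorem stmt15 {T n : ℕ} (s : Fin T → Matrix (Fin n) (Fin n) ℝ) (hs : s ∈ SW T n)
    (k : Fin T) (u v u' v' : Fin n)
    (h1 : 0 < s k u v) (h2 : s k u v < 1)
    (h3 : 0 < s k u' v') (h4 : s k u' v' < 1)
    (hne : (u, v) ≠ (u', v') ∧ (u, v) ≠ (v', u')) :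
    s ∉ Set.extremePoints ℝ (SW T n) :=
  stmt15' s hs k u v h1 h2
end

section
/- Suppose the discounted aggregate Katz-Bonacich objective v(s) = Σ_{t=1}^T D(t)·1'(I − φG(t))^{-1}1 is maximized over the convex set S_w of feasible weighted formation paths, where D(t) ≥ 0 and 0 ≤ φ < 1/λ_max(G) for all feasible G. Then v is a convex function on S_w, and hence its maximum over S_w is attained at an extreme point of S_w. -/
open Matrix BigOperators

lemma symm_dot {n : ℕ} {A : Matrix (Fin n) (Fin n) ℝ} (hs : Aᵀ = A) (x y : Fin n → ℝ) :
    x ⬝ᵥ (A *ᵥ y) = (A *ᵥ x) ⬝ᵥ y := by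
  rw [Matrix.dotProduct_mulVec, ← Matrix.mulVec_transpose, hs]

lemma herm_transpose {n : ℕ} {A : Matrix (Fin n) (Fin n) ℝ} (h : A.IsHermitian) : Aᵀ = A := by
  have := h
  ext i j
  have := congrFun (congrFun h i) j
  simpa using this

lemma key {n : ℕ} {A : Matrix (Fin n) (Fin n) ℝ} (hA : A.PosDef) (x y : Fin n → ℝ) :
    2 * (x ⬝ᵥ y) - y ⬝ᵥ (A *ᵥ y) ≤ x ⬝ᵥ (A⁻¹ *ᵥ x) := by
  have hdet : IsUnit A.det := hA.det_pos.ne'.isUnit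
  have hAinv : A * A⁻¹ = 1 := Matrix.mul_nonsing_inv A hdet
  have hsA : Aᵀ = A := herm_transpose hA.1
  set w := A⁻¹ *ᵥ x with hw
  have hAw : A *ᵥ w = x := by rw [hw, Matrix.mulVec_mulVec, hAinv, Matrix.one_mulVec]
  have h0 : 0 ≤ (y - w) ⬝ᵥ (A *ᵥ (y - w)) := by
    have := hA.posSemidef.dotProduct_mulVec_nonneg (y - w)
    simpa using this
  have hAy : A *ᵥ (y - w) = A *ᵥ y - x := by rw [Matrix.mulVec_sub, hAw]
  have h1 : w ⬝ᵥ (A *ᵥ y) = x ⬝ᵥ y := by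
    rw [symm_dot hsA, hAw]
  have e1 : (y - w) ⬝ᵥ (A *ᵥ (y - w)) =
      y ⬝ᵥ (A *ᵥ y) - 2 * (x ⬝ᵥ y) + x ⬝ᵥ (A⁻¹ *ᵥ x) := by
    rw [hAy, sub_dotProduct, dotProduct_sub, dotProduct_sub, h1]
    have h2 : y ⬝ᵥ x = x ⬝ᵥ y := dotProduct_comm _ _
    have h3 : w ⬝ᵥ x = x ⬝ᵥ (A⁻¹ *ᵥ x) := dotProduct_comm _ _
    rw [h2, h3]
    ring
  linarith [e1 ▸ h0]

lemma key_eq {n : ℕ} {A : Matrix (Fin n) (Fin n) ℝ} (hA : A.PosDef) (x : Fin n → ℝ) :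
    x ⬝ᵥ (A⁻¹ *ᵥ x) =
      2 * (x ⬝ᵥ (A⁻¹ *ᵥ x)) - (A⁻¹ *ᵥ x) ⬝ᵥ (A *ᵥ (A⁻¹ *ᵥ x)) := by
  have hdet : IsUnit A.det := hA.det_pos.ne'.isUnit
  have hAinv : A * A⁻¹ = 1 := Matrix.mul_nonsing_inv A hdet
  have hAw : A *ᵥ (A⁻¹ *ᵥ x) = x := by rw [Matrix.mulVec_mulVec, hAinv, Matrix.one_mulVec]
  rw [hAw, dotProduct_comm]
  ring

lemma comboineq {n : ℕ} {A₁ A₂ : Matrix (Fin n) (Fin n) ℝ} {a b : ℝ}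
    (h1 : A₁.PosDef) (h2 : A₂.PosDef) (hA : (a • A₁ + b • A₂).PosDef)
    (ha : 0 ≤ a) (hb : 0 ≤ b) (hab : a + b = 1) (x : Fin n → ℝ) :
    x ⬝ᵥ ((a • A₁ + b • A₂)⁻¹ *ᵥ x) ≤
      a * (x ⬝ᵥ (A₁⁻¹ *ᵥ x)) + b * (x ⬝ᵥ (A₂⁻¹ *ᵥ x)) := by
  have hx := key_eq hA x
  set y := (a • A₁ + b • A₂)⁻¹ *ᵥ x with hy
  have hlin : y ⬝ᵥ ((a • A₁ + b • A₂) *ᵥ y) =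
      a * (y ⬝ᵥ (A₁ *ᵥ y)) + b * (y ⬝ᵥ (A₂ *ᵥ y)) := by
    rw [Matrix.add_mulVec, dotProduct_add, Matrix.smul_mulVec,
      Matrix.smul_mulVec, dotProduct_smul, dotProduct_smul,
      smul_eq_mul, smul_eq_mul]
  have k1 := key h1 x y
  have k2 := key h2 x y
  have e : x ⬝ᵥ ((a • A₁ + b • A₂)⁻¹ *ᵥ x) =
      a * (2 * (x ⬝ᵥ y) - y ⬝ᵥ (A₁ *ᵥ y)) + b * (2 * (x ⬝ᵥ y) - y ⬝ᵥ (A₂ *ᵥ y)) := by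
    linear_combination hx - hlin - (2 * (x ⬝ᵥ y)) * hab
  nlinarith [mul_le_mul_of_nonneg_left k1 ha, mul_le_mul_of_nonneg_left k2 hb]

lemma sum_eq_dot {n : ℕ} (B : Matrix (Fin n) (Fin n) ℝ) :
    (∑ u, ∑ v, B u v) = (fun _ => (1:ℝ)) ⬝ᵥ (B *ᵥ fun _ => (1:ℝ)) := by
  simp [dotProduct, Matrix.mulVec]

lemma entry_comb {T n : ℕ} (s₁ s₂ : Fin T → Matrix (Fin n) (Fin n) ℝ) (a b : ℝ)
    (k : Fin T) (u v : Fin n) :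
    (a • s₁ + b • s₂) k u v = a * s₁ k u v + b * s₂ k u v := rfl

lemma prevNet_comb {T n : ℕ} (s₁ s₂ : Fin T → Matrix (Fin n) (Fin n) ℝ) (a b : ℝ)
    (k : Fin T) (u v : Fin n) :
    prevNet (a • s₁ + b • s₂) k u v = a * prevNet s₁ k u v + b * prevNet s₂ k u v := by
  unfold prevNet
  split
  · simp
  · exact entry_comb s₁ s₂ a b _ u v

lemma convexSW (T n : ℕ) : Convex ℝ (SW T n) := by
  intro s₁ h₁ s₂ h₂ a b ha hb hab
  intro k
  obtain ⟨sy1, d1, r1, m1, t1⟩ := h₁ k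
  obtain ⟨sy2, d2, r2, m2, t2⟩ := h₂ k
  refine ⟨Matrix.IsSymm.ext fun i j => ?_, fun u => ?_, fun u v => ⟨?_, ?_⟩, fun u v => ?_, ?_⟩
  · rw [entry_comb, entry_comb, sy1.apply, sy2.apply]
  · rw [entry_comb, d1, d2]; ring
  · have h1' := (r1 u v).1; have h2' := (r2 u v).1
    rw [entry_comb]
    have := mul_nonneg ha h1'; have := mul_nonneg hb h2'; linarith
  · have h1' := (r1 u v).2; have h2' := (r2 u v).2
    rw [entry_comb]
    have := mul_le_mul_of_nonneg_left h1' ha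
    have := mul_le_mul_of_nonneg_left h2' hb
    linarith
  · rw [entry_comb, prevNet_comb]
    have := mul_le_mul_of_nonneg_left (m1 u v) ha
    have := mul_le_mul_of_nonneg_left (m2 u v) hb
    linarith
  · have hsummand : ∀ u v, ((a • s₁ + b • s₂) k u v - prevNet (a • s₁ + b • s₂) k u v)
        = a * (s₁ k u v - prevNet s₁ k u v) + b * (s₂ k u v - prevNet s₂ k u v) := by
      intro u v; rw [entry_comb, prevNet_comb]; ring
    simp only [hsummand, Finset.sum_add_distrib, ← Finset.mul_sum]
    rw [t1, t2]; linarith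

lemma contEntry {T n : ℕ} (k : Fin T) (u v : Fin n) :
    Continuous fun s : Fin T → Matrix (Fin n) (Fin n) ℝ => s k u v :=
  (continuous_apply k).matrix_elem u v

lemma contPrev {T n : ℕ} (k : Fin T) (u v : Fin n) :
    Continuous fun s : Fin T → Matrix (Fin n) (Fin n) ℝ => prevNet s k u v := by
  unfold prevNet
  by_cases h : k.val = 0
  · simp only [h, if_true]
    simpa using continuous_const
  · simp only [h, if_false]
    exact (continuous_apply _).matrix_elem u v

lemma closedSW (T n : ℕ) : IsClosed (SW T n) := by
  have hdec : SW T n = ⋂ k : Fin T,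
      ((⋂ u, ⋂ v, {s : Fin T → Matrix (Fin n) (Fin n) ℝ | s k v u = s k u v}) ∩
       ((⋂ u, {s : Fin T → Matrix (Fin n) (Fin n) ℝ | s k u u = 0}) ∩
        ((⋂ u, ⋂ v, ({s : Fin T → Matrix (Fin n) (Fin n) ℝ | 0 ≤ s k u v} ∩
            {s : Fin T → Matrix (Fin n) (Fin n) ℝ | s k u v ≤ 1})) ∩
         ((⋂ u, ⋂ v, {s : Fin T → Matrix (Fin n) (Fin n) ℝ | prevNet s k u v ≤ s k u v}) ∩
          {s : Fin T → Matrix (Fin n) (Fin n) ℝ |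
            (∑ u, ∑ v, (s k u v - prevNet s k u v)) = 2})))) := by
    ext s
    simp only [SW, Set.mem_setOf_eq, Set.mem_iInter, Set.mem_inter_iff,
      Matrix.IsSymm.ext_iff]
  rw [hdec]
  refine isClosed_iInter fun k => ?_
  refine IsClosed.inter (isClosed_iInter fun u => isClosed_iInter fun v =>
    isClosed_eq (contEntry k v u) (contEntry k u v)) ?_
  refine IsClosed.inter (isClosed_iInter fun u =>
    isClosed_eq (contEntry k u u) continuous_const) ?_
  refine IsClosed.inter (isClosed_iInter fun u => isClosed_iInter fun v =>
    IsClosed.inter (isClosed_le continuous_const (contEntry k u v))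
      (isClosed_le (contEntry k u v) continuous_const)) ?_
  refine IsClosed.inter (isClosed_iInter fun u => isClosed_iInter fun v =>
    isClosed_le (contPrev k u v) (contEntry k u v)) ?_
  exact isClosed_eq (continuous_finset_sum _ fun u _ => continuous_finset_sum _ fun v _ =>
    (contEntry k u v).sub (contPrev k u v)) continuous_const

lemma compactSW (T n : ℕ) : IsCompact (SW T n) := by
  have hpi : IsCompact (Set.pi Set.univ fun _ : Fin T =>
      (Set.pi Set.univ fun _ : Fin n => Set.pi Set.univ fun _ : Fin n => Set.Icc (0:ℝ) 1 :
        Set (Matrix (Fin n) (Fin n) ℝ))) :=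
    isCompact_univ_pi fun _ => isCompact_univ_pi fun _ => isCompact_univ_pi fun _ =>
      isCompact_Icc
  refine IsCompact.of_isClosed_subset hpi (closedSW T n) ?_
  intro s hs k _
  intro u _ v _
  exact ⟨((hs k).2.2.1 u v).1, ((hs k).2.2.1 u v).2⟩

lemma contA {T n : ℕ} (φ : ℝ) (k : Fin T) :
    Continuous fun s : Fin T → Matrix (Fin n) (Fin n) ℝ =>
      ((1 : Matrix (Fin n) (Fin n) ℝ) - φ • s k) :=
  continuous_const.sub ((continuous_apply k).const_smul φ)

lemma inv_entry {n : ℕ} (A : Matrix (Fin n) (Fin n) ℝ) (u v : Fin n) :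
    (A⁻¹) u v = (A.det)⁻¹ * A.adjugate u v := by
  rw [Matrix.inv_def, Ring.inverse_eq_inv']
  rfl

lemma contF {T n : ℕ} (D : Fin T → ℝ) (φ : ℝ)
    (hpd : ∀ s ∈ SW T n, ∀ k : Fin T,
      ((1 : Matrix (Fin n) (Fin n) ℝ) - φ • s k).PosDef) :
    ContinuousOn (fun s : Fin T → Matrix (Fin n) (Fin n) ℝ =>
      ∑ k, D k * ∑ u, ∑ v, (((1 : Matrix (Fin n) (Fin n) ℝ) - φ • s k)⁻¹) u v)
      (SW T n) := by
  intro s₀ hs₀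
  apply ContinuousAt.continuousWithinAt
  refine tendsto_finset_sum _ fun k _ => ?_
  refine ContinuousAt.mul continuousAt_const ?_
  refine tendsto_finset_sum _ fun u _ => ?_
  refine tendsto_finset_sum _ fun v _ => ?_
  have hcd : Continuous fun s : Fin T → Matrix (Fin n) (Fin n) ℝ =>
      ((1 : Matrix (Fin n) (Fin n) ℝ) - φ • s k).det := (contA φ k).matrix_det
  have hca : Continuous fun s : Fin T → Matrix (Fin n) (Fin n) ℝ =>
      ((1 : Matrix (Fin n) (Fin n) ℝ) - φ • s k).adjugate u v :=
    ((contA φ k).matrix_adjugate).matrix_elem u v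
  have hne : ((1 : Matrix (Fin n) (Fin n) ℝ) - φ • s₀ k).det ≠ 0 :=
    (hpd s₀ hs₀ k).det_pos.ne'
  have : ContinuousAt (fun s : Fin T → Matrix (Fin n) (Fin n) ℝ =>
      (((1 : Matrix (Fin n) (Fin n) ℝ) - φ • s k).det)⁻¹ *
        ((1 : Matrix (Fin n) (Fin n) ℝ) - φ • s k).adjugate u v) s₀ :=
    (hcd.continuousAt.inv₀ hne).mul hca.continuousAt
  exact this.congr (by
    filter_upwards with s
    rw [inv_entry])

lemma sq_comb_id {a b p q : ℝ} (hab : a + b = 1) :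
    a * p ^ 2 + b * q ^ 2 - (a * p + b * q) ^ 2 = a * b * (p - q) ^ 2 := by
  linear_combination (-(a * p ^ 2 + b * q ^ 2)) * hab

lemma sq_comb_le {a b : ℝ} (ha : 0 ≤ a) (hb : 0 ≤ b) (hab : a + b = 1) (p q : ℝ) :
    (a * p + b * q) ^ 2 ≤ a * p ^ 2 + b * q ^ 2 := by
  nlinarith [sq_nonneg (p - q), mul_nonneg ha hb]

lemma sq_comb_lt {a b : ℝ} (ha : 0 < a) (hb : 0 < b) (hab : a + b = 1) {p q : ℝ}
    (hpq : p ≠ q) : (a * p + b * q) ^ 2 < a * p ^ 2 + b * q ^ 2 := by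
  have h1 : 0 < (p - q) ^ 2 := by
    have := sub_ne_zero.mpr hpq
    positivity
  have h2 := sq_comb_id (a := a) (b := b) (p := p) (q := q) hab
  nlinarith [mul_pos (mul_pos ha hb) h1]

def gfun {T n : ℕ} (s : Fin T → Matrix (Fin n) (Fin n) ℝ) : ℝ :=
  ∑ k, ∑ u, ∑ v, (s k u v) ^ 2

lemma contG {T n : ℕ} : Continuous (gfun (T := T) (n := n)) :=
  continuous_finset_sum _ fun k _ => continuous_finset_sum _ fun u _ =>
    continuous_finset_sum _ fun v _ => (contEntry k u v).pow 2

lemma gconvlt {T n : ℕ} {s₁ s₂ : Fin T → Matrix (Fin n) (Fin n) ℝ} (hne : s₁ ≠ s₂)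
    {a b : ℝ} (ha : 0 < a) (hb : 0 < b) (hab : a + b = 1) :
    gfun (a • s₁ + b • s₂) < a * gfun s₁ + b * gfun s₂ := by
  have hex : ∃ k u v, s₁ k u v ≠ s₂ k u v := by
    by_contra h
    push_neg at h
    exact hne (funext fun k => Matrix.ext fun u v => h k u v)
  obtain ⟨k₀, u₀, v₀, hne'⟩ := hex
  have hle : ∀ (k : Fin T) (u v : Fin n),
      ((a • s₁ + b • s₂) k u v) ^ 2 ≤ a * (s₁ k u v) ^ 2 + b * (s₂ k u v) ^ 2 := by
    intro k u v
    rw [entry_comb]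
    exact sq_comb_le ha.le hb.le hab _ _
  have hrhs : a * gfun s₁ + b * gfun s₂
      = ∑ k, ∑ u, ∑ v, (a * (s₁ k u v) ^ 2 + b * (s₂ k u v) ^ 2) := by
    simp only [gfun, Finset.sum_add_distrib, Finset.mul_sum]
  rw [hrhs]
  unfold gfun
  refine Finset.sum_lt_sum
    (fun k _ => Finset.sum_le_sum fun u _ => Finset.sum_le_sum fun v _ => hle k u v)
    ⟨k₀, Finset.mem_univ _, ?_⟩
  refine Finset.sum_lt_sum (fun u _ => Finset.sum_le_sum fun v _ => hle k₀ u v)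
    ⟨u₀, Finset.mem_univ _, ?_⟩
  refine Finset.sum_lt_sum (fun v _ => hle k₀ u₀ v) ⟨v₀, Finset.mem_univ _, ?_⟩
  rw [entry_comb]
  exact sq_comb_lt ha hb hab hne'

lemma convexF {T n : ℕ} (D : Fin T → ℝ) (hD : ∀ t, 0 ≤ D t) (φ : ℝ)
    (hpd : ∀ s ∈ SW T n, ∀ k : Fin T,
      ((1 : Matrix (Fin n) (Fin n) ℝ) - φ • s k).PosDef) :
    ConvexOn ℝ (SW T n)
      (fun s => ∑ k, D k * ∑ u, ∑ v,
        (((1 : Matrix (Fin n) (Fin n) ℝ) - φ • s k)⁻¹) u v) := by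
  refine ⟨convexSW T n, fun s₁ h₁ s₂ h₂ a b ha hb hab => ?_⟩
  have hmem : a • s₁ + b • s₂ ∈ SW T n := convexSW T n h₁ h₂ ha hb hab
  have hAcomb : ∀ k : Fin T, (1 : Matrix (Fin n) (Fin n) ℝ) - φ • (a • s₁ + b • s₂) k
      = a • ((1 : Matrix (Fin n) (Fin n) ℝ) - φ • s₁ k)
        + b • ((1 : Matrix (Fin n) (Fin n) ℝ) - φ • s₂ k) := by
    intro k
    have h0 : (a • s₁ + b • s₂) k = a • s₁ k + b • s₂ k := rfl
    rw [h0, show a • ((1 : Matrix (Fin n) (Fin n) ℝ) - φ • s₁ k)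
        + b • ((1 : Matrix (Fin n) (Fin n) ℝ) - φ • s₂ k)
        = (a + b) • (1 : Matrix (Fin n) (Fin n) ℝ) - φ • (a • s₁ k + b • s₂ k) from by
      module, hab, one_smul]
  have hk : ∀ k : Fin T,
      (∑ u, ∑ v, (((1 : Matrix (Fin n) (Fin n) ℝ) - φ • (a • s₁ + b • s₂) k)⁻¹) u v)
      ≤ a * (∑ u, ∑ v, (((1 : Matrix (Fin n) (Fin n) ℝ) - φ • s₁ k)⁻¹) u v)
        + b * (∑ u, ∑ v, (((1 : Matrix (Fin n) (Fin n) ℝ) - φ • s₂ k)⁻¹) u v) := by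
    intro k
    rw [sum_eq_dot, sum_eq_dot, sum_eq_dot, hAcomb k]
    exact comboineq (hpd s₁ h₁ k) (hpd s₂ h₂ k) ((hAcomb k) ▸ hpd _ hmem k) ha hb hab _
  refine le_trans (Finset.sum_le_sum fun k _ =>
    mul_le_mul_of_nonneg_left (hk k) (hD k)) (le_of_eq ?_)
  rw [Finset.smul_sum, Finset.smul_sum, ← Finset.sum_add_distrib]
  exact Finset.sum_congr rfl fun k _ => by simp only [smul_eq_mul]; ring


/-- The discounted aggregate Katz-Bonacich objective
`v(s) = Σ_t D(t)·1'(I - φ G(t))⁻¹1` is convex on `S_w`, and hence attains its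
maximum over `S_w` at an extreme point of `S_w`. -/
theorem stmt16 {T n : ℕ} (D : Fin T → ℝ) (hD : ∀ t, 0 ≤ D t)
    (φ : ℝ) (hφ : 0 ≤ φ)
    (hpd : ∀ s ∈ SW T n, ∀ k : Fin T,
      ((1 : Matrix (Fin n) (Fin n) ℝ) - φ • s k).PosDef)
    (hne : (SW T n).Nonempty) :
    ConvexOn ℝ (SW T n)
      (fun s => ∑ k, D k * ∑ u, ∑ v,
        (((1 : Matrix (Fin n) (Fin n) ℝ) - φ • s k)⁻¹) u v) ∧
    ∃ s ∈ Set.extremePoints ℝ (SW T n), ∀ s' ∈ SW T n,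
      (∑ k, D k * ∑ u, ∑ v,
          (((1 : Matrix (Fin n) (Fin n) ℝ) - φ • s' k)⁻¹) u v) ≤
        ∑ k, D k * ∑ u, ∑ v,
          (((1 : Matrix (Fin n) (Fin n) ℝ) - φ • s k)⁻¹) u v := by
  have hconv := convexF D hD φ hpd
  refine ⟨hconv, ?_⟩
  set F : (Fin T → Matrix (Fin n) (Fin n) ℝ) → ℝ := fun s => ∑ k, D k * ∑ u, ∑ v,
    (((1 : Matrix (Fin n) (Fin n) ℝ) - φ • s k)⁻¹) u v with hF
  obtain ⟨x₀, hx₀SW, hx₀max⟩ := (compactSW T n).exists_isMaxOn hne (contF D φ hpd)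
  set M := SW T n ∩ F ⁻¹' {F x₀} with hM
  have hMclosed : IsClosed M :=
    (contF D φ hpd).preimage_isClosed_of_isClosed (closedSW T n) isClosed_singleton
  have hMcomp : IsCompact M :=
    IsCompact.of_isClosed_subset (compactSW T n) hMclosed Set.inter_subset_left
  have hMne : M.Nonempty := ⟨x₀, hx₀SW, rfl⟩
  obtain ⟨x, hxM, hgx⟩ := hMcomp.exists_isMaxOn hMne contG.continuousOn
  have hxSW : x ∈ SW T n := hxM.1
  have hFx : F x = F x₀ := hxM.2
  have hmaxF : ∀ s' ∈ SW T n, F s' ≤ F x := fun s' hs' => (hx₀max hs').trans_eq hFx.symm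
  refine ⟨x, ⟨hxSW, fun x₁ hx₁ x₂ hx₂ hseg => ?_⟩, fun s' hs' => hmaxF s' hs'⟩
  obtain ⟨a, b, ha, hb, hab, hx⟩ := hseg
  have hFle : F x ≤ a * F x₁ + b * F x₂ := by
    have h := hconv.2 hx₁ hx₂ ha.le hb.le hab
    rw [hx] at h
    simpa [smul_eq_mul] using h
  have h1 : F x₁ ≤ F x := hmaxF x₁ hx₁
  have h2 : F x₂ ≤ F x := hmaxF x₂ hx₂
  have hsum : a * F x + b * F x = F x := by linear_combination (F x) * hab
  have e1 : F x₁ = F x := by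
    have ha1 := mul_le_mul_of_nonneg_left h1 ha.le
    have hb1 := mul_le_mul_of_nonneg_left h2 hb.le
    have : a * (F x - F x₁) = 0 := by nlinarith
    rcases mul_eq_zero.mp this with h | h
    · exact absurd h ha.ne'
    · linarith
  have e2 : F x₂ = F x := by
    have ha1 := mul_le_mul_of_nonneg_left h1 ha.le
    have hb1 := mul_le_mul_of_nonneg_left h2 hb.le
    have : b * (F x - F x₂) = 0 := by nlinarith
    rcases mul_eq_zero.mp this with h | h
    · exact absurd h hb.ne'
    · linarith
  have hx₁M : x₁ ∈ M := ⟨hx₁, by simp only [Set.mem_preimage, Set.mem_singleton_iff]; rw [e1, hFx]⟩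
  have hx₂M : x₂ ∈ M := ⟨hx₂, by simp only [Set.mem_preimage, Set.mem_singleton_iff]; rw [e2, hFx]⟩
  by_cases hx12 : x₁ = x₂
  · subst hx12
    have hxx : x = x₁ := by
      rw [← hx]
      exact Convex.combo_self hab x₁
    exact hxx.symm
  · exfalso
    have hlt := gconvlt hx12 ha hb hab
    rw [hx] at hlt
    have g1 : gfun x₁ ≤ gfun x := hgx hx₁M
    have g2 : gfun x₂ ≤ gfun x := hgx hx₂M
    have hgsum : a * gfun x + b * gfun x = gfun x := by linear_combination (gfun x) * hab
    nlinarith [mul_le_mul_of_nonneg_left g1 ha.le, mul_le_mul_of_nonneg_left g2 hb.le]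
end

section
/- Let G[α] = G + αE_{t−p̄+1,p+1} + (1−α)E_{1,p+2} be as in the weighted quasi-complete comparison, with p ≥ 2, and define y^m = (G[α])^m 1. Then for every m ≥ 0, y_1^m ≥ y_{p+1}^m: the total weighted walk count of length m from node 1 (a clique node connected to node p+1) is at least that from node p+1. -/
open Matrix BigOperators

structure QSt where
  u : ℝ
  v : ℝ
  w : ℝ
  x : ℝ
  g : ℝ
  e : ℝ
  o : ℝ

def qstep (al B B2 Γ Γ2 : ℝ) (st : QSt) : QSt :=
  ⟨B*st.v + st.w + Γ*st.x + st.g + (1-al)*st.e,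
   st.u + B2*st.v + st.w + Γ*st.x + st.g,
   st.u + B*st.v + Γ*st.x + al*st.g,
   st.u + B*st.v + st.w + Γ2*st.x,
   st.u + B*st.v + al*st.w,
   (1-al)*st.u,
   0⟩

def qseq (al B B2 Γ Γ2 : ℝ) : ℕ → QSt
  | 0 => ⟨1,1,1,1,1,1,1⟩
  | (m+1) => qstep al B B2 Γ Γ2 (qseq al B B2 Γ Γ2 m)

lemma qnonneg {al B B2 Γ Γ2 : ℝ} (hal0 : 0 ≤ al) (hal1 : al ≤ 1)
    (hB : 0 ≤ B) (hB2 : 0 ≤ B2) (hΓ2 : 0 ≤ Γ2) (hΓ : 0 ≤ Γ) :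
    ∀ m, 0 ≤ (qseq al B B2 Γ Γ2 m).u ∧ 0 ≤ (qseq al B B2 Γ Γ2 m).v ∧
    0 ≤ (qseq al B B2 Γ Γ2 m).w ∧ 0 ≤ (qseq al B B2 Γ Γ2 m).x ∧
    0 ≤ (qseq al B B2 Γ Γ2 m).g ∧ 0 ≤ (qseq al B B2 Γ Γ2 m).e := by
  intro m
  induction m with
  | zero => norm_num [qseq]
  | succ m ih =>
    obtain ⟨h1, h2, h3, h4, h5, h6⟩ := ih
    simp only [qseq, qstep]
    refine ⟨?_, ?_, ?_, ?_, ?_, ?_⟩ <;> nlinarith [mul_nonneg hB h2, mul_nonneg hΓ h4,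
      mul_nonneg hB2 h2, mul_nonneg hΓ2 h4, mul_nonneg hal0 h5, mul_nonneg hal0 h3,
      mul_nonneg (sub_nonneg.2 hal1) h6, mul_nonneg (sub_nonneg.2 hal1) h1]

def qP (al B B2 Γ Γ2 : ℝ) (m : ℕ) : Prop :=
  ((qseq al B B2 Γ Γ2 m).u ≤ (qseq al B B2 Γ Γ2 (m+1)).u) ∧
  ((qseq al B B2 Γ Γ2 m).v ≤ (qseq al B B2 Γ Γ2 (m+1)).v) ∧
  ((qseq al B B2 Γ Γ2 m).w ≤ (qseq al B B2 Γ Γ2 (m+1)).w) ∧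
  ((qseq al B B2 Γ Γ2 m).x ≤ (qseq al B B2 Γ Γ2 (m+1)).x) ∧
  ((qseq al B B2 Γ Γ2 m).g ≤ (qseq al B B2 Γ Γ2 (m+1)).g) ∧
  ((qseq al B B2 Γ Γ2 m).e ≤ (qseq al B B2 Γ Γ2 (m+1)).e) ∧
  ((qseq al B B2 Γ Γ2 m).e ≤ (1-al) * (qseq al B B2 Γ Γ2 m).u) ∧
  ((qseq al B B2 Γ Γ2 m).g ≤ (qseq al B B2 Γ Γ2 m).u) ∧
  ((qseq al B B2 Γ Γ2 m).u - (qseq al B B2 Γ Γ2 m).g ≤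
    (1-al)*(qseq al B B2 Γ Γ2 m).w + Γ*(qseq al B B2 Γ Γ2 m).x + (1-al)*(qseq al B B2 Γ Γ2 m).e) ∧
  ((qseq al B B2 Γ Γ2 m).w ≤ (qseq al B B2 Γ Γ2 m).u) ∧
  ((qseq al B B2 Γ Γ2 m).u - (qseq al B B2 Γ Γ2 m).w ≤
    (1-al)*((qseq al B B2 Γ Γ2 m).g + (qseq al B B2 Γ Γ2 m).e)) ∧
  (Γ*(qseq al B B2 Γ Γ2 m).x ≤ Γ*(qseq al B B2 Γ Γ2 m).u) ∧
  (Γ*((qseq al B B2 Γ Γ2 m).u - (qseq al B B2 Γ Γ2 m).x) ≤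
    Γ*((qseq al B B2 Γ Γ2 m).g + (1-al)*(qseq al B B2 Γ Γ2 m).e))

set_option maxHeartbeats 1000000 in
lemma qbase {al B B2 Γ Γ2 : ℝ} (hal0 : 0 ≤ al) (hal1 : al ≤ 1)
    (hB : 0 ≤ B) (hB2 : 0 ≤ B2) (hΓ2 : 0 ≤ Γ2) (hΓ : 0 ≤ Γ)
    (hΓc : Γ = 0 ∨ Γ2 = Γ - 1) : qP al B B2 Γ Γ2 1 := by
  unfold qP
  simp only [qseq, qstep]
  rcases hΓc with h | h <;> subst h <;>
  refine ⟨?_, ?_, ?_, ?_, ?_, ?_, ?_, ?_, ?_, ?_, ?_, ?_, ?_⟩ <;>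
    nlinarith [mul_nonneg hB hal0, mul_nonneg hΓ hal0, mul_nonneg hΓ hΓ2,
      mul_nonneg hΓ hB, mul_nonneg hB2 hΓ, sq_nonneg al,
      mul_nonneg hΓ (sub_nonneg.2 hal1), mul_nonneg hB (sub_nonneg.2 hal1),
      mul_nonneg (mul_nonneg hΓ hΓ2) hal0, mul_nonneg hal0 (sub_nonneg.2 hal1),
      mul_nonneg hB2 hal0, mul_nonneg hB hB2, mul_nonneg hΓ2 hal0]

set_option maxHeartbeats 2000000 in
lemma qind {al B B2 Γ Γ2 : ℝ} (hal0 : 0 ≤ al) (hal1 : al ≤ 1)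
    (hB : 0 ≤ B) (hB2 : 0 ≤ B2) (hΓ2 : 0 ≤ Γ2) (hΓ : 0 ≤ Γ)
    (hΓc : Γ = 0 ∨ Γ2 = Γ - 1) {m : ℕ}
    (hP : qP al B B2 Γ Γ2 m) : qP al B B2 Γ Γ2 (m+1) := by
  have h1a : (0:ℝ) ≤ 1 - al := by linarith
  obtain ⟨hu, hv, hw, hx, hg, he⟩ := qnonneg hal0 hal1 hB hB2 hΓ2 hΓ m
  unfold qP at hP ⊢
  simp only [qseq, qstep] at hP ⊢
  obtain ⟨p1, p2, p3, p4, p5, p6, i3, i4, i5, i6, i7, i8, i9⟩ := hP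
  refine ⟨?_, ?_, ?_, ?_, ?_, ?_, ?_, ?_, ?_, ?_, ?_, ?_, ?_⟩
  · nlinarith [mul_nonneg hB (sub_nonneg.2 p2), mul_nonneg hΓ (sub_nonneg.2 p4),
      mul_nonneg h1a (sub_nonneg.2 p6)]
  · nlinarith [mul_nonneg hB2 (sub_nonneg.2 p2), mul_nonneg hΓ (sub_nonneg.2 p4)]
  · nlinarith [mul_nonneg hB (sub_nonneg.2 p2), mul_nonneg hΓ (sub_nonneg.2 p4),
      mul_nonneg hal0 (sub_nonneg.2 p5)]
  · nlinarith [mul_nonneg hB (sub_nonneg.2 p2), mul_nonneg hΓ2 (sub_nonneg.2 p4)]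
  · nlinarith [mul_nonneg hB (sub_nonneg.2 p2), mul_nonneg hal0 (sub_nonneg.2 p3)]
  · nlinarith [mul_nonneg h1a (sub_nonneg.2 p1)]
  -- i3' : e' ≤ (1-al) u'
  · nlinarith [mul_nonneg h1a (sub_nonneg.2 p1)]
  -- i4' : g' ≤ u'
  · nlinarith [i5]
  -- i5'
  · rcases hΓc with hΓ0 | hΓ1
    · subst hΓ0
      nlinarith [mul_nonneg h1a (sub_nonneg.2 i3), mul_nonneg h1a (sub_nonneg.2 i4),
        mul_nonneg (mul_nonneg hal0 hal0) (sub_nonneg.2 i4),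
        mul_nonneg hal0 hw, mul_nonneg h1a (mul_nonneg hB hv),
        mul_nonneg hal0 (mul_nonneg h1a hu), mul_nonneg h1a (mul_nonneg h1a hu),
        mul_nonneg hal0 (mul_nonneg hal0 hu)]
    · have hΓge : (1:ℝ) ≤ Γ := by rw [hΓ1] at hΓ2; linarith
      have hux : (0:ℝ) ≤ (qseq al B B2 Γ Γ2 m).u - (qseq al B B2 Γ Γ2 m).x := by
        rcases le_or_gt 0 ((qseq al B B2 Γ Γ2 m).u - (qseq al B B2 Γ Γ2 m).x) with h | h
        · exact h
        · exfalso; nlinarith [i8]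
      subst hΓ1
      nlinarith [mul_nonneg h1a (sub_nonneg.2 i3), mul_nonneg h1a (sub_nonneg.2 i4),
        mul_nonneg (mul_nonneg hal0 hal0) (sub_nonneg.2 i4),
        mul_nonneg (mul_nonneg hal0 hΓ) hux,
        mul_nonneg (mul_nonneg hΓ (by linarith : (0:ℝ) ≤ Γ - 1)) hx,
        mul_nonneg (by linarith : (0:ℝ) ≤ Γ - 1) hw, mul_nonneg hal0 hw,
        mul_nonneg hΓ (mul_nonneg h1a hu), mul_nonneg h1a (mul_nonneg h1a hu),
        mul_nonneg hal0 (mul_nonneg h1a hu), mul_nonneg hΓ (mul_nonneg hB hv),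
        mul_nonneg h1a (mul_nonneg hB hv)]
  -- i6' : w' ≤ u'
  · nlinarith [i7]
  -- i7'
  · nlinarith [mul_nonneg h1a (sub_nonneg.2 i3), mul_nonneg h1a (sub_nonneg.2 i4),
      mul_nonneg h1a (sub_nonneg.2 i6), mul_nonneg (mul_nonneg hal0 hal0) (sub_nonneg.2 i6),
      mul_nonneg hal0 (mul_nonneg h1a hu), mul_nonneg h1a (mul_nonneg hB hv),
      mul_nonneg hal0 (mul_nonneg hal0 hu)]
  -- i8'
  · rcases hΓc with hΓ0 | hΓ1
    · subst hΓ0; nlinarith []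
    · subst hΓ1; nlinarith [i9]
  -- i9'
  · rcases hΓc with hΓ0 | hΓ1
    · subst hΓ0; nlinarith []
    · have hΓge : (1:ℝ) ≤ Γ := by rw [hΓ1] at hΓ2; linarith
      have hux : (0:ℝ) ≤ (qseq al B B2 Γ Γ2 m).u - (qseq al B B2 Γ Γ2 m).x := by
        rcases le_or_gt 0 ((qseq al B B2 Γ Γ2 m).u - (qseq al B B2 Γ Γ2 m).x) with h | h
        · exact h
        · exfalso; nlinarith [i8]
      subst hΓ1
      nlinarith [mul_nonneg hΓ (sub_nonneg.2 i4), mul_nonneg hΓ hux,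
        mul_nonneg hΓ (mul_nonneg h1a (sub_nonneg.2 i3)),
        mul_nonneg hΓ (mul_nonneg hB hv), mul_nonneg hΓ (mul_nonneg hal0 hw),
        mul_nonneg hΓ (mul_nonneg h1a hu)]

lemma qmain {al B B2 Γ Γ2 : ℝ} (hal0 : 0 ≤ al) (hal1 : al ≤ 1)
    (hB : 0 ≤ B) (hB2 : 0 ≤ B2) (hΓ2 : 0 ≤ Γ2) (hΓ : 0 ≤ Γ)
    (hΓc : Γ = 0 ∨ Γ2 = Γ - 1) :
    ∀ m, (qseq al B B2 Γ Γ2 m).g ≤ (qseq al B B2 Γ Γ2 m).u := by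
  have key : ∀ m, 1 ≤ m → qP al B B2 Γ Γ2 m := by
    intro m hm
    induction m, hm using Nat.le_induction with
    | base => exact qbase hal0 hal1 hB hB2 hΓ2 hΓ hΓc
    | succ m hm ih => exact qind hal0 hal1 hB hB2 hΓ2 hΓ hΓc ih
  intro m
  match m with
  | 0 => simp [qseq]
  | (m+1) =>
    have h := (key (m+1) (by omega)).2.2.2.2.2.2.2.1
    exact h

def vecfun {n : ℕ} (p s : ℕ) (st : QSt) : Fin n → ℝ := fun i =>
  if i.val = 0 then st.u else if i.val < s then st.v else if i.val = s then st.w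
  else if i.val < p then st.x else if i.val = p then st.g else if i.val = p+1 then st.e
  else st.o

lemma card_val_Ico {n : ℕ} (l h : ℕ) (hh : h ≤ n) :
    ((Finset.univ : Finset (Fin n)).filter fun j => l ≤ j.val ∧ j.val < h).card = h - l := by
  rw [← Nat.card_Ico l h]
  apply Finset.card_bij (fun j _ => j.val)
  · intro x hx
    simp only [Finset.mem_filter] at hx
    simp only [Finset.mem_Ico]
    omega
  · intro x _ y _ hxy
    exact Fin.val_injective hxy
  · intro k hk
    simp only [Finset.mem_Ico] at hk
    refine ⟨⟨k, by omega⟩, ?_, rfl⟩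
    simp only [Finset.mem_filter, Finset.mem_univ, true_and]
    omega

lemma sum_ite_val_Ico {n : ℕ} (l h : ℕ) (hh : h ≤ n) (v : ℝ) :
    (∑ j : Fin n, if l ≤ j.val ∧ j.val < h then v else 0) = ((h - l : ℕ) : ℝ) * v := by
  rw [Finset.sum_ite, Finset.sum_const, Finset.sum_const_zero, add_zero, nsmul_eq_mul,
    card_val_Ico l h hh]

lemma sum_delta {n : ℕ} (d : Fin n) (f : Fin n → ℝ) :
    (∑ j : Fin n, if j = d then f j else 0) = f d := by
  rw [Finset.sum_ite_eq']
  simp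

lemma sumLA {n : ℕ} (p s : ℕ) (hs1 : 1 ≤ s) (hsp : s < p) (hn : p + 2 ≤ n) (st : QSt) :
    (∑ j : Fin n, if j.val < p then vecfun p s st j else 0)
      = st.u + ((s-1 : ℕ) : ℝ) * st.v + st.w + ((p-1-s : ℕ) : ℝ) * st.x := by
  have hpt : ∀ j : Fin n, (if j.val < p then vecfun p s st j else 0)
      = (if 0 ≤ j.val ∧ j.val < 1 then st.u else 0) + (if 1 ≤ j.val ∧ j.val < s then st.v else 0)
        + (if s ≤ j.val ∧ j.val < s+1 then st.w else 0)
        + (if s+1 ≤ j.val ∧ j.val < p then st.x else 0) := by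
    intro j
    unfold vecfun
    split_ifs <;> first | ring1 | (exfalso; simp -failIfUnchanged only [false_and, true_and, and_false, and_true, or_false, false_or, not_true, not_false_iff] at *; omega)
  rw [Finset.sum_congr rfl (fun j _ => hpt j)]
  rw [Finset.sum_add_distrib, Finset.sum_add_distrib, Finset.sum_add_distrib,
    sum_ite_val_Ico 0 1 (by omega), sum_ite_val_Ico 1 s (by omega),
    sum_ite_val_Ico s (s+1) (by omega), sum_ite_val_Ico (s+1) p (by omega)]
  have e1 : (1 - 0 : ℕ) = 1 := by omega
  have e2 : (s + 1 - s : ℕ) = 1 := by omega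
  have e3 : (p - (s+1) : ℕ) = p - 1 - s := by omega
  rw [e1, e2, e3]
  push_cast
  ring

lemma sumLB {n : ℕ} (p s : ℕ) (hs1 : 1 ≤ s) (hsp : s < p) (hn : p + 2 ≤ n) (st : QSt) :
    (∑ j : Fin n, if j.val < s then vecfun p s st j else 0)
      = st.u + ((s-1 : ℕ) : ℝ) * st.v := by
  have hpt : ∀ j : Fin n, (if j.val < s then vecfun p s st j else 0)
      = (if 0 ≤ j.val ∧ j.val < 1 then st.u else 0)
        + (if 1 ≤ j.val ∧ j.val < s then st.v else 0) := by
    intro j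
    unfold vecfun
    split_ifs <;> first | ring1 | (exfalso; simp -failIfUnchanged only [false_and, true_and, and_false, and_true, or_false, false_or, not_true, not_false_iff] at *; omega)
  rw [Finset.sum_congr rfl (fun j _ => hpt j)]
  rw [Finset.sum_add_distrib, sum_ite_val_Ico 0 1 (by omega), sum_ite_val_Ico 1 s (by omega)]
  have e1 : (1 - 0 : ℕ) = 1 := by omega
  rw [e1]
  push_cast
  ring

set_option maxHeartbeats 4000000 in
lemma keyLemma {n p s : ℕ} (hp : 2 ≤ p) (hs1 : 1 ≤ s) (hsp : s < p) (hn : p + 2 ≤ n)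
    (a b z c : Fin n) (ha : a.val = s) (hb : b.val = p) (hz : z.val = 0) (hc : c.val = p+1)
    (G : Matrix (Fin n) (Fin n) ℝ)
    (hG : ∀ i j : Fin n, G i j =
      if i ≠ j ∧ ((i.val < p ∧ j.val < p) ∨
        (i.val = p ∧ j.val < s) ∨
        (j.val = p ∧ i.val < s)) then 1 else 0)
    (al : ℝ) (st : QSt) :
    (G + al • E a b + (1 - al) • E z c) *ᵥ vecfun p s st
      = vecfun p s (qstep al ((s-1 : ℕ) : ℝ) ((s-2 : ℕ) : ℝ) ((p-1-s : ℕ) : ℝ)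
          ((p-1-s-1 : ℕ) : ℝ) st) := by
  set f : Fin n → ℝ := vecfun p s st with hf
  funext i
  have hfz : f z = st.u := by unfold f; unfold vecfun; rw [if_pos hz]
  have hfa : f a = st.w := by
    unfold f; unfold vecfun
    rw [if_neg (by omega), if_neg (by omega), if_pos ha]
  have hfb : f b = st.g := by
    unfold f; unfold vecfun
    rw [if_neg (by omega), if_neg (by omega), if_neg (by omega), if_neg (by omega), if_pos hb]
  have hfc : f c = st.e := by
    unfold f; unfold vecfun
    rw [if_neg (by omega), if_neg (by omega), if_neg (by omega), if_neg (by omega),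
      if_neg (by omega), if_pos hc]
  have hM : ∀ j : Fin n, (G + al • E a b + (1 - al) • E z c) i j
      = G i j + al * E a b i j + (1 - al) * E z c i j := by
    intro j
    simp [Matrix.add_apply, Matrix.smul_apply, smul_eq_mul]
  have hLHS : ((G + al • E a b + (1 - al) • E z c) *ᵥ f) i
      = ∑ j : Fin n, (G i j + al * E a b i j + (1 - al) * E z c i j) * f j := by
    simp only [Matrix.mulVec, dotProduct]
    exact Finset.sum_congr rfl (fun j _ => by rw [hM j])
  rw [hLHS]
  -- case analysis on the class of i
  rcases Nat.lt_or_ge i.val (p+2) with hcase | hcase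
  · rcases Nat.lt_or_ge i.val p with hcase2 | hcase2
    · rcases Nat.lt_trichotomy i.val s with hcase3 | hcase3 | hcase3
      · rcases Nat.eq_zero_or_pos i.val with hi0 | hi0
        · -- i = z
          have hiz : i = z := Fin.val_injective (by omega)
          rw [hiz]
          have hpt : ∀ j : Fin n, (G z j + al * E a b z j + (1 - al) * E z c z j) * f j
              = ((if j.val < p then f j else 0) - (if j = z then f j else 0))
                + (if j = b then f j else 0) + (1 - al) * (if j = c then f j else 0) := by
            intro j
            simp only [hG, E, ne_eq, Fin.ext_iff, ha, hb, hz, hc, true_and, and_true, false_and, and_false, or_false, false_or, not_true, not_false_iff]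
            split_ifs <;> first | ring1 | (exfalso; simp -failIfUnchanged only [false_and, true_and, and_false, and_true, or_false, false_or, not_true, not_false_iff] at *; omega)
          rw [Finset.sum_congr rfl (fun j _ => hpt j)]
          rw [Finset.sum_add_distrib, Finset.sum_add_distrib, Finset.sum_sub_distrib,
            ← Finset.mul_sum, sumLA p s hs1 hsp hn, sum_delta, sum_delta, sum_delta,
            hfz, hfb, hfc]
          unfold vecfun
          rw [if_pos hz]
          simp only [qstep]
          ring
        · -- i in class B : 1 ≤ i.val < s
          have hpt : ∀ j : Fin n, (G i j + al * E a b i j + (1 - al) * E z c i j) * f j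
              = ((if j.val < p then f j else 0) - (if j = i then f j else 0))
                + (if j = b then f j else 0) := by
            intro j
            simp only [hG, E, ne_eq, Fin.ext_iff, ha, hb, hz, hc, true_and, and_true, false_and, and_false, or_false, false_or, not_true, not_false_iff]
            split_ifs <;> first | ring1 | (exfalso; simp -failIfUnchanged only [false_and, true_and, and_false, and_true, or_false, false_or, not_true, not_false_iff] at *; omega)
          rw [Finset.sum_congr rfl (fun j _ => hpt j)]
          rw [Finset.sum_add_distrib, Finset.sum_sub_distrib,
            sumLA p s hs1 hsp hn, sum_delta, sum_delta, hfb]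
          have hfi : f i = st.v := by
            unfold f; unfold vecfun
            rw [if_neg (by omega), if_pos (by omega)]
          rw [hfi]
          unfold vecfun
          rw [if_neg (by omega), if_pos (by omega)]
          simp only [qstep]
          have hcast : ((s-1 : ℕ) : ℝ) = ((s-2 : ℕ) : ℝ) + 1 := by
            have : (s - 1 : ℕ) = (s - 2) + 1 := by omega
            rw [this]; push_cast; ring
          rw [hcast]
          ring
      · -- i = a
        have hia : i = a := Fin.val_injective (by omega)
        rw [hia]
        have hpt : ∀ j : Fin n, (G a j + al * E a b a j + (1 - al) * E z c a j) * f j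
            = ((if j.val < p then f j else 0) - (if j = a then f j else 0))
              + al * (if j = b then f j else 0) := by
          intro j
          simp only [hG, E, ne_eq, Fin.ext_iff, ha, hb, hz, hc, true_and, and_true, false_and, and_false, or_false, false_or, not_true, not_false_iff]
          split_ifs <;> first | ring1 | (exfalso; simp -failIfUnchanged only [false_and, true_and, and_false, and_true, or_false, false_or, not_true, not_false_iff] at *; omega)
        rw [Finset.sum_congr rfl (fun j _ => hpt j)]
        rw [Finset.sum_add_distrib, Finset.sum_sub_distrib, ← Finset.mul_sum,
          sumLA p s hs1 hsp hn, sum_delta, sum_delta, hfa, hfb]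
        unfold vecfun
        rw [if_neg (by omega), if_neg (by omega), if_pos ha]
        simp only [qstep]
        ring
      · -- i in class C' : s < i.val < p
        have hpt : ∀ j : Fin n, (G i j + al * E a b i j + (1 - al) * E z c i j) * f j
            = ((if j.val < p then f j else 0) - (if j = i then f j else 0)) := by
          intro j
          simp only [hG, E, ne_eq, Fin.ext_iff, ha, hb, hz, hc, true_and, and_true, false_and, and_false, or_false, false_or, not_true, not_false_iff]
          split_ifs <;> first | ring1 | (exfalso; simp -failIfUnchanged only [false_and, true_and, and_false, and_true, or_false, false_or, not_true, not_false_iff] at *; omega)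
        rw [Finset.sum_congr rfl (fun j _ => hpt j)]
        rw [Finset.sum_sub_distrib, sumLA p s hs1 hsp hn, sum_delta]
        have hfi : f i = st.x := by
          unfold f; unfold vecfun
          rw [if_neg (by omega), if_neg (by omega), if_neg (by omega), if_pos (by omega)]
        rw [hfi]
        unfold vecfun
        rw [if_neg (by omega), if_neg (by omega), if_neg (by omega), if_pos (by omega)]
        simp only [qstep]
        have hcast : ((p-1-s : ℕ) : ℝ) = ((p-1-s-1 : ℕ) : ℝ) + 1 := by
          have : (p - 1 - s : ℕ) = (p - 1 - s - 1) + 1 := by omega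
          rw [this]; push_cast; ring
        rw [hcast]
        ring
    · rcases Nat.lt_or_ge i.val (p+1) with hcase3 | hcase3
      · -- i = b
        have hib : i = b := Fin.val_injective (by omega)
        rw [hib]
        have hpt : ∀ j : Fin n, (G b j + al * E a b b j + (1 - al) * E z c b j) * f j
            = (if j.val < s then f j else 0) + al * (if j = a then f j else 0) := by
          intro j
          simp only [hG, E, ne_eq, Fin.ext_iff, ha, hb, hz, hc, true_and, and_true, false_and, and_false, or_false, false_or, not_true, not_false_iff]
          split_ifs <;> first | ring1 | (exfalso; simp -failIfUnchanged only [false_and, true_and, and_false, and_true, or_false, false_or, not_true, not_false_iff] at *; omega)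
        rw [Finset.sum_congr rfl (fun j _ => hpt j)]
        rw [Finset.sum_add_distrib, ← Finset.mul_sum, sumLB p s hs1 hsp hn, sum_delta, hfa]
        unfold vecfun
        rw [if_neg (by omega), if_neg (by omega), if_neg (by omega), if_neg (by omega),
          if_pos hb]
        simp only [qstep]
      · -- i = c
        have hic : i = c := Fin.val_injective (by omega)
        rw [hic]
        have hpt : ∀ j : Fin n, (G c j + al * E a b c j + (1 - al) * E z c c j) * f j
            = (1 - al) * (if j = z then f j else 0) := by
          intro j
          simp only [hG, E, ne_eq, Fin.ext_iff, ha, hb, hz, hc, true_and, and_true, false_and, and_false, or_false, false_or, not_true, not_false_iff]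
          split_ifs <;> first | ring1 | (exfalso; simp -failIfUnchanged only [false_and, true_and, and_false, and_true, or_false, false_or, not_true, not_false_iff] at *; omega)
        rw [Finset.sum_congr rfl (fun j _ => hpt j)]
        rw [← Finset.mul_sum, sum_delta, hfz]
        unfold vecfun
        rw [if_neg (by omega), if_neg (by omega), if_neg (by omega), if_neg (by omega),
          if_neg (by omega), if_pos hc]
        simp only [qstep]
  · -- isolated node
    have hpt : ∀ j : Fin n, (G i j + al * E a b i j + (1 - al) * E z c i j) * f j = 0 := by
      intro j
      simp only [hG, E, ne_eq, Fin.ext_iff, ha, hb, hz, hc, true_and, and_true, false_and, and_false, or_false, false_or, not_true, not_false_iff]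
      split_ifs <;> first | ring1 | (exfalso; simp -failIfUnchanged only [false_and, true_and, and_false, and_true, or_false, false_or, not_true, not_false_iff] at *; omega)
    rw [Finset.sum_congr rfl (fun j _ => hpt j)]
    rw [Finset.sum_const_zero]
    unfold vecfun
    rw [if_neg (by omega), if_neg (by omega), if_neg (by omega), if_neg (by omega),
      if_neg (by omega), if_neg (by omega)]
    simp [qstep]


/-- 0-indexed: with `G` the quasi-complete graph (clique on `0,…,p-1`, `p ≥ 2`,
node `p` adjacent to `0,…,t-p̄-1`, `p̄ = p(p-1)/2 < t < p(p+1)/2`, node `p+1`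
isolated) and `G[α] = G + α E_{a b} + (1-α) E_{z c}` for `α ∈ [0,1]`, the weighted
walk counts `yᵐ = (G[α])ᵐ 1` satisfy `yᵐ_z ≥ yᵐ_b` for every `m ≥ 0`
(node `z` is the first clique node, node `b` is the node `p`). -/
theorem stmt18 {n p t : ℕ} (hp : 2 ≤ p)
    (h1 : p * (p - 1) / 2 < t) (h2 : t < p * (p + 1) / 2)
    (a b z c : Fin n)
    (ha : a.val = t - p * (p - 1) / 2) (hb : b.val = p) (hz : z.val = 0)
    (hc : c.val = p + 1)
    (G : Matrix (Fin n) (Fin n) ℝ)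
    (hG : ∀ i j : Fin n, G i j =
      if i ≠ j ∧ ((i.val < p ∧ j.val < p) ∨
        (i.val = p ∧ j.val < t - p * (p - 1) / 2) ∨
        (j.val = p ∧ i.val < t - p * (p - 1) / 2)) then 1 else 0)
    (α : ℝ) (hα0 : 0 ≤ α) (hα1 : α ≤ 1) :
    ∀ m : ℕ,
      (((G + α • E a b + (1 - α) • E z c) ^ m) *ᵥ (fun _ => (1 : ℝ))) b ≤
        (((G + α • E a b + (1 - α) • E z c) ^ m) *ᵥ (fun _ => (1 : ℝ))) z := by
  set s := t - p * (p - 1) / 2 with hsdef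
  -- basic facts about s
  have hpred : p - 1 + 1 = p := by omega
  have heven : Even ((p - 1) * p) := by
    have := Nat.even_mul_succ_self (p - 1)
    rwa [hpred] at this
  have hdvd : 2 ∣ p * (p - 1) := by
    rw [Nat.mul_comm]
    exact heven.two_dvd
  have hps : p * (p + 1) = p * (p - 1) + 2 * p := by
    have h' : p + 1 = (p - 1) + 2 := by omega
    rw [h', Nat.mul_add]
    ring
  rw [hps] at h2
  have hs1 : 1 ≤ s := by omega
  have hsp : s < p := by omega
  have hn : p + 2 ≤ n := by have := c.isLt; omega
  -- the quotient dynamics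
  set B : ℝ := ((s - 1 : ℕ) : ℝ) with hB
  set B2 : ℝ := ((s - 2 : ℕ) : ℝ) with hB2
  set Γ : ℝ := ((p - 1 - s : ℕ) : ℝ) with hΓ
  set Γ2 : ℝ := ((p - 1 - s - 1 : ℕ) : ℝ) with hΓ2
  have key : ∀ m : ℕ, ((G + α • E a b + (1 - α) • E z c) ^ m) *ᵥ (fun _ => (1 : ℝ))
      = vecfun p s (qseq α B B2 Γ Γ2 m) := by
    intro m
    induction m with
    | zero =>
      rw [pow_zero, Matrix.one_mulVec]
      funext i
      unfold vecfun
      simp only [qseq]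
      split_ifs <;> rfl
    | succ m ih =>
      rw [pow_succ', ← Matrix.mulVec_mulVec, ih,
        keyLemma hp hs1 hsp hn a b z c ha hb hz hc G hG α (qseq α B B2 Γ Γ2 m)]
      rfl
  intro m
  rw [key m]
  have hvb : vecfun (n := n) p s (qseq α B B2 Γ Γ2 m) b = (qseq α B B2 Γ Γ2 m).g := by
    unfold vecfun
    rw [if_neg (by omega), if_neg (by omega), if_neg (by omega), if_neg (by omega), if_pos hb]
  have hvz : vecfun (n := n) p s (qseq α B B2 Γ Γ2 m) z = (qseq α B B2 Γ Γ2 m).u := by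
    unfold vecfun
    rw [if_pos hz]
  rw [hvb, hvz]
  apply qmain hα0 hα1 (by rw [hB]; positivity) (by rw [hB2]; positivity)
    (by rw [hΓ2]; positivity) (by rw [hΓ]; positivity)
  rcases Nat.eq_zero_or_pos (p - 1 - s) with hg0 | hg1
  · left
    rw [hΓ, hg0]
    norm_num
  · right
    rw [hΓ, hΓ2]
    have : (p - 1 - s : ℕ) = (p - 1 - s - 1) + 1 := by omega
    rw [this]
    push_cast
    ring
end
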